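/- arXiv:1203.6432 — 2 statements merged into one kernel-verified Lean document; each statement's English description precedes it below -/
import Mathlib

section
/- Suppose w_e|_{K_{i(e)}} is uniformly continuous for every e ∈ E. Then Φ(F(M)) = M for every equilibrium state M ∈ E(M). -/
open MeasureTheory Filter Topology
open scoped ENNReal NNReal Classical

noncomputable section

/-- A countable Markov system `(K_{i(e)}, w_e, p_e)_{e ∈ E}` on a metric space `K`:
a partition `(K_j)_{j ∈ N}` of `K` into nonempty Borel sets, source and target maps
`i, t : E → N` (`i` surjective), and for each `e ∈ E` Borel maps `w_e` and probability
functions `p_e` (extended by zero outside `K_{i(e)}`) with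
`∑_{e, i(e)=j} p_e(y) = 1` for `y ∈ K_j`. -/
structure MarkovSystem (K : Type*) [MetricSpace K] [MeasurableSpace K]
    (N : Type*) (E : Type*) where
  Kset : N → Set K
  Kset_nonempty : ∀ j, (Kset j).Nonempty
  Kset_measurable : ∀ j, MeasurableSet (Kset j)
  Kset_disjoint : Pairwise (Function.onFun Disjoint Kset)
  Kset_cover : (⋃ j, Kset j) = Set.univ
  i : E → N
  t : E → N
  i_surj : Function.Surjective i
  w : E → K → K
  p : E → K → ℝ
  w_measurable : ∀ e, Measurable (w e)
  p_measurable : ∀ e, Measurable (p e)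
  p_nonneg : ∀ e x, 0 ≤ p e x
  p_le_one : ∀ e x, p e x ≤ 1
  p_zero_outside : ∀ e x, x ∉ Kset (i e) → p e x = 0
  w_mapsTo : ∀ e, Set.MapsTo (w e) (Kset (i e)) (Kset (t e))
  p_pos_somewhere : ∀ e, ∃ x ∈ Kset (i e), 0 < p e x
  p_tsum_one : ∀ j, ∀ x ∈ Kset j, (∑' e : {e : E // i e = j}, p e.val x) = 1

/-- `Ē = E ∪ {∞}` (one-point compactification); with `E` countable its Borel σ-algebra
consists of all subsets. -/
instance optionMeasurableSpace (E : Type*) : MeasurableSpace (Option E) := ⊤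

/-- The code space `Σ̄ = Ē^ℤ`, carrying the product σ-algebra. -/
abbrev CodeSpace (E : Type*) : Type _ := ℤ → Option E

/-- The left shift `S` on the code space, `(Sσ)_{k-1} = σ_k`. -/
def shiftMap (E : Type*) : CodeSpace E → CodeSpace E := fun σ k => σ (k + 1)

/-- The cylinder set `_m[es₀, …, es_{n}] = {σ : σ_{m+k} = es_k}`. -/
def cylSetL {E : Type*} (m : ℤ) (es : List (Option E)) : Set (CodeSpace E) :=
  {σ | ∀ (k : ℕ) (h : k < es.length), σ (m + (k : ℤ)) = es.get ⟨k, h⟩}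

/-- The σ-algebra `𝓕` generated by the cylinder sets `_m[e_m, …, e_0]`, `m ≤ 0`. -/
def pastAlgebra (E : Type*) : MeasurableSpace (CodeSpace E) :=
  MeasurableSpace.generateFrom
    {A | ∃ es : List (Option E), es ≠ [] ∧ A = cylSetL (1 - (es.length : ℤ)) es}

/-- The conditional entropy `h_S(Λ) = H_Λ((_1[e])_{e ∈ Ē} | 𝓕)`. -/
def entropyS {E : Type*} (Λ : Measure (CodeSpace E)) : ℝ≥0∞ :=
  ∑' eo : Option E,
    ∫⁻ σ, ENNReal.ofReal
        (Real.negMulLog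
          ((Λ[Set.indicator {τ : CodeSpace E | τ 1 = eo} (fun _ => (1 : ℝ)) | pastAlgebra E]) σ)) ∂Λ

namespace MarkovSystem

variable {K : Type*} [MetricSpace K] [MeasurableSpace K] {N E : Type*}

/-- The Markov operator `Uf = ∑_e p_e · (f ∘ w_e)` acting on nonnegative Borel functions. -/
def markovOp (M : MarkovSystem K N E) (f : K → ℝ≥0∞) : K → ℝ≥0∞ :=
  fun x => ∑' e : E, ENNReal.ofReal (M.p e x) * f (M.w e x)

/-- The adjoint operator `U*` acting on measures, `(U*ν)(B) = ∫ U(1_B) dν`. -/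
def adjOp (M : MarkovSystem K N E) (ν : Measure K) : Measure K :=
  Measure.sum fun e : E =>
    Measure.map (M.w e) (ν.withDensity fun x => ENNReal.ofReal (M.p e x))

/-- `μ ∈ P(M)`: `μ` is an invariant Borel probability measure, `U*μ = μ`. -/
def IsInvariantMeasure (M : MarkovSystem K N E) (μ : Measure K) : Prop :=
  IsProbabilityMeasure μ ∧ M.adjOp μ = μ

/-- The path space `Σ_G`: all coordinates lie in `E` and `i(σ_{n+1}) = t(σ_n)`. -/
def pathSpace (M : MarkovSystem K N E) : Set (CodeSpace E) :=
  {σ | ∀ n : ℤ, ∃ e e' : E, σ n = some e ∧ σ (n + 1) = some e' ∧ M.i e' = M.t e}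

/-- `T_j = {σ ∈ Σ_G : t(σ_0) = j}`. -/
def Tset (M : MarkovSystem K N E) (j : N) : Set (CodeSpace E) :=
  {σ | σ ∈ M.pathSpace ∧ ∃ e : E, σ 0 = some e ∧ M.t e = j}

/-- `w` extended to `Ē`, with `w_∞ = id`. -/
def wext (M : MarkovSystem K N E) : Option E → K → K := fun o => o.elim id M.w

/-- `p` extended to `Ē`, with `p_∞ = 0`. -/
def pext (M : MarkovSystem K N E) : Option E → K → ℝ := fun o => o.elim (fun _ => 0) M.p

/-- `i` extended to `Ē`, with `i(∞) = j₀`. -/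
def iext (M : MarkovSystem K N E) (j0 : N) : Option E → N := fun o => o.elim j0 M.i

/-- `t` extended to `Ē`, with `t(∞) = j₀`. -/
def text (M : MarkovSystem K N E) (j0 : N) : Option E → N := fun o => o.elim j0 M.t

/-- `iterW M σ n y = w_{σ_0} ∘ w_{σ_{-1}} ∘ ⋯ ∘ w_{σ_{-n}} (y)`. -/
def iterW (M : MarkovSystem K N E) (σ : CodeSpace E) : ℕ → K → K
  | 0, y => M.wext (σ 0) y
  | n + 1, y => M.iterW σ n (M.wext (σ (-(n + 1 : ℤ))) y)

/-- `orbit M j0 xp σ n = w_{σ_0} ∘ ⋯ ∘ w_{σ_{-n}} (x_{i(σ_{-n})})`. -/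
def orbit (M : MarkovSystem K N E) (j0 : N) (xp : N → K) (σ : CodeSpace E) (n : ℕ) : K :=
  M.iterW σ n (xp (M.iext j0 (σ (-(n : ℤ)))))

/-- `D`: the set of `σ ∈ Σ_G` for which `lim_{m → -∞} w_{σ_0} ∘ ⋯ ∘ w_{σ_m}(x_{i(σ_m)})` exists. -/
def codeDomain (M : MarkovSystem K N E) (j0 : N) (xp : N → K) : Set (CodeSpace E) :=
  {σ | σ ∈ M.pathSpace ∧ ∃ l : K, Tendsto (fun n : ℕ => M.orbit j0 xp σ n) atTop (𝓝 l)}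

/-- The coding map `F`: the above limit on `D`, and `x_{t(σ_0)}` elsewhere. -/
def code (M : MarkovSystem K N E) (j0 : N) (xp : N → K) (σ : CodeSpace E) : K :=
  if h : σ ∈ M.codeDomain j0 xp then h.2.choose else xp (M.text j0 (σ 0))

/-- `Λ ∈ E(M)`: `Λ` is a shift-invariant Borel probability measure with `Λ(D) = 1` and
`E_Λ(1_{_1[e]} | 𝓕) = p_e ∘ F` `Λ`-a.e. for every `e ∈ E` (an equilibrium state). -/
def IsEquilibrium (M : MarkovSystem K N E) (j0 : N) (xp : N → K)
    (Λ : Measure (CodeSpace E)) : Prop :=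
  IsProbabilityMeasure Λ ∧ Measure.map (shiftMap E) Λ = Λ ∧
    Λ (M.codeDomain j0 xp) = 1 ∧
    ∀ e : E,
      (Λ[Set.indicator {σ : CodeSpace E | σ 1 = some e} (fun _ => (1 : ℝ)) | pastAlgebra E])
        =ᵐ[Λ] fun σ => M.p e (M.code j0 xp σ)

/-- `pbar` is the family of continuous extensions `p̄_e` of `p_e|_{K_{i(e)}}` to the closure
of `K_{i(e)}`, extended further by zero on `K`. -/
def IsUCExtensionP (M : MarkovSystem K N E) (pbar : E → K → ℝ) : Prop :=
  ∀ e : E, ContinuousOn (pbar e) (closure (M.Kset (M.i e))) ∧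
    (∀ x ∈ M.Kset (M.i e), pbar e x = M.p e x) ∧
    (∀ x, x ∉ closure (M.Kset (M.i e)) → pbar e x = 0)

/-- `wb` is a family of continuous extensions `w̄_e` of `w_e|_{K_{i(e)}}` to the closure
of `K_{i(e)}`. -/
def IsUCExtensionW (M : MarkovSystem K N E) (wb : E → K → K) : Prop :=
  ∀ e : E, ContinuousOn (wb e) (closure (M.Kset (M.i e))) ∧
    (∀ x ∈ M.Kset (M.i e), wb e x = M.w e x)

/-- The Markov system is uniformly continuous: each `w_e|_{K_{i(e)}}` and `p_e|_{K_{i(e)}}`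
is uniformly continuous. -/
def IsUniformlyContinuous (M : MarkovSystem K N E) : Prop :=
  ∀ e : E, UniformContinuousOn (M.w e) (M.Kset (M.i e)) ∧
    UniformContinuousOn (M.p e) (M.Kset (M.i e))

/-- `∂p_e = p̄_e · 1_{cl(K_{i(e)}) \ K_{i(e)}}`. -/
def dp (M : MarkovSystem K N E) (pbar : E → K → ℝ) (e : E) : K → ℝ :=
  Set.indicator (closure (M.Kset (M.i e)) \ M.Kset (M.i e)) (pbar e)

/-- `Λ ∈ Ẽ(M)` (asymptotic state): shift-invariant probability with `Λ(D) = 1` and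
`E_Λ(1_{_1[e]} | 𝓕) = (p̄_e ∘ F)·1_{T_{i(e)}}` `Λ`-a.e. for every `e`. -/
def IsAsymptotic (M : MarkovSystem K N E) (j0 : N) (xp : N → K) (pbar : E → K → ℝ)
    (Λ : Measure (CodeSpace E)) : Prop :=
  IsProbabilityMeasure Λ ∧ Measure.map (shiftMap E) Λ = Λ ∧
    Λ (M.codeDomain j0 xp) = 1 ∧
    ∀ e : E,
      (Λ[Set.indicator {σ : CodeSpace E | σ 1 = some e} (fun _ => (1 : ℝ)) | pastAlgebra E])
        =ᵐ[Λ] Set.indicator (M.Tset (M.i e)) (fun σ => pbar e (M.code j0 xp σ))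

/-- `Λ ∈ E_⊥(M)`: shift-invariant probability with `Λ(D) = 1` and
`E_Λ(1_{_1[e]} | 𝓕) = (∂p_e ∘ F)·1_{T_{i(e)}}` `Λ`-a.e. for every `e`. -/
def IsPerp (M : MarkovSystem K N E) (j0 : N) (xp : N → K) (pbar : E → K → ℝ)
    (Λ : Measure (CodeSpace E)) : Prop :=
  IsProbabilityMeasure Λ ∧ Measure.map (shiftMap E) Λ = Λ ∧
    Λ (M.codeDomain j0 xp) = 1 ∧
    ∀ e : E,
      (Λ[Set.indicator {σ : CodeSpace E | σ 1 = some e} (fun _ => (1 : ℝ)) | pastAlgebra E])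
        =ᵐ[Λ] Set.indicator (M.Tset (M.i e)) (fun σ => M.dp pbar e (M.code j0 xp σ))

/-- `G = ⋃_{k ≥ 0} ⋃_{j ∈ N} S^{-k}(F^{-1}(K_j) ∩ T_j)`. -/
def Gset (M : MarkovSystem K N E) (j0 : N) (xp : N → K) : Set (CodeSpace E) :=
  ⋃ (k : ℕ) (j : N), (shiftMap E)^[k] ⁻¹' ((M.code j0 xp) ⁻¹' (M.Kset j) ∩ M.Tset j)

/-- `M` is non-degenerate: for every asymptotic state `Λ` there is `i ∈ N` with
`Λ(T_i ∩ F^{-1}(K_i)) > 0`. -/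
def IsNonDegenerate (M : MarkovSystem K N E) (j0 : N) (xp : N → K) (pbar : E → K → ℝ) : Prop :=
  ∀ Λ : Measure (CodeSpace E), M.IsAsymptotic j0 xp pbar Λ →
    ∃ i : N, 0 < Λ (M.Tset i ∩ (M.code j0 xp) ⁻¹' (M.Kset i))

/-- `M` is consistent: `F(Λ) ∈ P(M)` for every asymptotic state `Λ`. -/
def IsConsistent (M : MarkovSystem K N E) (j0 : N) (xp : N → K) (pbar : E → K → ℝ) : Prop :=
  ∀ Λ : Measure (CodeSpace E), M.IsAsymptotic j0 xp pbar Λ →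
    M.IsInvariantMeasure (Measure.map (M.code j0 xp) Λ)

/-- `Rf = ∑_e ∂p_e · (f ∘ w̄_e)`. -/
def Rop (M : MarkovSystem K N E) (pbar : E → K → ℝ) (wb : E → K → K)
    (f : K → ℝ≥0∞) : K → ℝ≥0∞ :=
  fun x => ∑' e : E, ENNReal.ofReal (M.dp pbar e x) * f (wb e x)

/-- `Ω = ⋂_{n ≥ 1} {R^n 1 ≥ 1}`. -/
def OmegaSet (M : MarkovSystem K N E) (pbar : E → K → ℝ) (wb : E → K → K) : Set K :=
  ⋂ n : ℕ, {x : K | 1 ≤ (M.Rop pbar wb)^[n + 1] (fun _ => 1) x}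

/-- `ξ_j = ∑_{e, i(e) = j} sup_{x ∈ K_j} p_e(x)`. -/
def xi (M : MarkovSystem K N E) (j : N) : ℝ≥0∞ :=
  ∑' e : {e : E // M.i e = j}, ⨆ x ∈ M.Kset j, ENNReal.ofReal (M.p e.val x)

/-- `M` has a dominating Markov chain: `ξ_j < ∞` for all `j ∈ N`. -/
def HasDominatingChain (M : MarkovSystem K N E) : Prop := ∀ j : N, M.xi j ≠ ⊤

/-- `ξ_j · q_{j j'} = ∑_{e, i(e) = j, t(e) = j'} sup_{x ∈ K_j} p_e(x)`. -/
def xiq (M : MarkovSystem K N E) (j j' : N) : ℝ≥0∞ :=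
  ∑' e : {e : E // M.i e = j ∧ M.t e = j'}, ⨆ x ∈ M.Kset j, ENNReal.ofReal (M.p e.val x)

/-- `c = ∑_{j'} sup_j ξ_j q_{j j'}`. -/
def cConst (M : MarkovSystem K N E) : ℝ≥0∞ := ∑' j' : N, ⨆ j : N, M.xiq j j'

/-- `α^{x_0}_n({j}) = (1/n) ∑_{k=1}^n ((U*)^k δ_{x_0})(K_j)`. -/
def alphaMeas (M : MarkovSystem K N E) (x0 : K) (n : ℕ) (j : N) : ℝ≥0∞ :=
  (n : ℝ≥0∞)⁻¹ * ∑ k ∈ Finset.range n, (M.adjOp^[k + 1] (Measure.dirac x0)) (M.Kset j)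

/-- Condition (T) at `x_0`: the sequence `(α^{x_0}_n)_n` is uniformly tight. -/
def ConditionT (M : MarkovSystem K N E) (x0 : K) : Prop :=
  ∀ ε : ℝ, 0 < ε → ∃ V : Finset N,
    ∀ n : ℕ, (∑' j : {j : N // j ∉ V}, M.alphaMeas x0 (n + 1) j.val) < ENNReal.ofReal ε

/-- `M` is contractive with contraction rate `a`:
`∑_{e, i(e) = j} p_e(x) d(w_e x, w_e y) ≤ a·d(x, y)` on each `K_j`. -/
def IsContractive (M : MarkovSystem K N E) (a : ℝ) : Prop :=
  ∀ j : N, ∀ x ∈ M.Kset j, ∀ y ∈ M.Kset j,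
    (∑' e : {e : E // M.i e = j},
        ENNReal.ofReal (M.p e.val x * dist (M.w e.val x) (M.w e.val y)))
      ≤ ENNReal.ofReal (a * dist x y)

/-- `L(x) = ∑_j d(x, x_j)·1_{K_j}(x)`. -/
def Lfun (M : MarkovSystem K N E) (xp : N → K) : K → ℝ≥0∞ :=
  fun x => ∑' j : N, Set.indicator (M.Kset j) (fun y => ENNReal.ofReal (dist y (xp j))) x

/-- `b = sup_j sup_{x ∈ K_j} ∑_{e, i(e) = j} p_e(x)·d(w_e(x_{i(e)}), x_{t(e)})`. -/
def bConst (M : MarkovSystem K N E) (xp : N → K) : ℝ≥0∞ :=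
  ⨆ j : N, ⨆ x ∈ M.Kset j,
    ∑' e : {e : E // M.i e = j},
      ENNReal.ofReal (M.p e.val x * dist (M.w e.val (xp (M.i e.val))) (xp (M.t e.val)))

/-- `P^m_x` evaluated on a word: `p_{e_0}(x)·p_{e_1}(w_{e_0}x)·⋯`. -/
def wordProb (M : MarkovSystem K N E) : List (Option E) → K → ℝ
  | [], _ => 1
  | o :: rest, x => M.pext o x * M.wordProb rest (M.wext o x)

/-- `Λ = Φ(μ)`: `Λ` is a shift-invariant Borel probability measure with
`Λ(_m[e_m, …, e_n]) = ∫ P^m_x(_m[e_m, …, e_n]) dμ(x)` for all cylinders with `m ≤ 0`. -/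
def IsPhiOf (M : MarkovSystem K N E) (μ : Measure K) (Λ : Measure (CodeSpace E)) : Prop :=
  IsProbabilityMeasure Λ ∧ Measure.map (shiftMap E) Λ = Λ ∧
    ∀ m : ℤ, m ≤ 0 → ∀ es : List (Option E),
      Λ (cylSetL m es) = ∫⁻ x, ENNReal.ofReal (M.wordProb es x) ∂μ

/-- The (negative of the) energy function: `-u(σ) = -log p_{σ_1}(F(σ))` on `D`
(`+∞` if `p_{σ_1}(F(σ)) = 0`) and `+∞` off `D`, valued in `[0, ∞]`. -/
def negEnergy (M : MarkovSystem K N E) (j0 : N) (xp : N → K) (σ : CodeSpace E) : ℝ≥0∞ :=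
  if σ ∈ M.codeDomain j0 xp then
    (σ 1).elim ⊤ fun e =>
      if M.p e (M.code j0 xp σ) = 0 then ⊤
      else ENNReal.ofReal (-Real.log (M.p e (M.code j0 xp σ)))
  else ⊤

/-- The free energy `h_S(Λ) + ∫ u dΛ`, as an extended real number. -/
def freeEnergy (M : MarkovSystem K N E) (j0 : N) (xp : N → K)
    (Λ : Measure (CodeSpace E)) : EReal :=
  (entropyS Λ : EReal) - ((∫⁻ σ, M.negEnergy j0 xp σ ∂Λ : ℝ≥0∞) : EReal)

/-- `Λ₀ ∈ E(u)`: `Λ₀` is a thermodynamic equilibrium state for the energy function `u`. -/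
def IsEquilibriumForU (M : MarkovSystem K N E) (j0 : N) (xp : N → K)
    (Λ0 : Measure (CodeSpace E)) : Prop :=
  IsProbabilityMeasure Λ0 ∧ Measure.map (shiftMap E) Λ0 = Λ0 ∧ entropyS Λ0 ≠ ⊤ ∧
    M.freeEnergy j0 xp Λ0 =
      sSup {r : EReal | ∃ Λ : Measure (CodeSpace E),
        IsProbabilityMeasure Λ ∧ Measure.map (shiftMap E) Λ = Λ ∧ entropyS Λ ≠ ⊤ ∧
          r = M.freeEnergy j0 xp Λ}

end MarkovSystem

end


variable {K : Type*} [MetricSpace K] [CompleteSpace K] [MeasurableSpace K] [BorelSpace K]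
  {N E : Type*} [Countable N] [Countable E]


noncomputable section AuxPhi
open MeasureTheory Filter Topology
open scoped ENNReal Classical

namespace AuxPhi

variable {K : Type*} [MetricSpace K] [CompleteSpace K] [MeasurableSpace K] [BorelSpace K]
  {N E : Type*} [Countable N] [Countable E]

instance : MeasurableSingletonClass (Option E) := ⟨fun _ => trivial⟩

lemma measurable_coord (k : ℤ) : Measurable fun σ : CodeSpace E => σ k :=
  measurable_pi_apply k

lemma measurableSet_coord_eq (k : ℤ) (eo : Option E) :
    MeasurableSet {σ : CodeSpace E | σ k = eo} :=
  measurable_coord k (MeasurableSet.singleton eo)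

lemma measurableSet_cylSetL (m : ℤ) (es : List (Option E)) :
    MeasurableSet (cylSetL m es) := by
  have h : cylSetL m es = ⋂ (k : ℕ) (h : k < es.length),
      {σ : CodeSpace E | σ (m + (k : ℤ)) = es.get ⟨k, h⟩} := by
    ext σ
    simp only [cylSetL, Set.mem_setOf_eq, Set.mem_iInter]
  rw [h]
  exact MeasurableSet.iInter fun k => MeasurableSet.iInter fun h =>
    measurableSet_coord_eq _ _

lemma pastAlgebra_le : pastAlgebra E ≤ (inferInstance : MeasurableSpace (CodeSpace E)) := by
  refine MeasurableSpace.generateFrom_le ?_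
  rintro A ⟨es, -, rfl⟩
  exact measurableSet_cylSetL _ _

lemma cylSetL_nil (m : ℤ) : cylSetL m ([] : List (Option E)) = Set.univ := by
  ext σ
  simp only [cylSetL, Set.mem_setOf_eq, Set.mem_univ, iff_true]
  intro k h
  exact absurd h (Nat.not_lt_zero k)

lemma mem_cylSetL_ofFn {n : ℕ} (m : ℤ) (v : Fin n → Option E) (σ : CodeSpace E) :
    σ ∈ cylSetL m (List.ofFn v) ↔ ∀ j : Fin n, σ (m + ((j : ℕ) : ℤ)) = v j := by
  simp only [cylSetL, Set.mem_setOf_eq, List.length_ofFn, List.get_ofFn]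
  constructor
  · intro h j
    have := h j j.isLt
    simpa using this
  · intro h k hk
    simpa using h ⟨k, hk⟩

lemma pastAlgebra_coord_eq {k : ℤ} (hk : k ≤ 0) (eo : Option E) :
    MeasurableSet[pastAlgebra E] {σ : CodeSpace E | σ k = eo} := by
  obtain ⟨n, hn⟩ : ∃ n : ℕ, (n : ℤ) = 1 - k := ⟨(1 - k).toNat, Int.toNat_of_nonneg (by omega)⟩
  have hnpos : 0 < n := by omega
  have hset : {σ : CodeSpace E | σ k = eo} =
      ⋃ (v : {v : Fin n → Option E // v ⟨0, hnpos⟩ = eo}), cylSetL k (List.ofFn v.1) := by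
    ext σ
    simp only [Set.mem_iUnion, Set.mem_setOf_eq]
    constructor
    · intro hσ
      refine ⟨⟨fun j => σ (k + ((j : ℕ) : ℤ)), by simpa using hσ⟩, ?_⟩
      rw [mem_cylSetL_ofFn]
      intro j
      rfl
    · rintro ⟨⟨v, hv0⟩, hσ⟩
      rw [mem_cylSetL_ofFn] at hσ
      have := hσ ⟨0, hnpos⟩
      simpa [hv0] using this
  rw [hset]
  refine MeasurableSet.iUnion fun v => ?_
  have hkval : k = 1 - ((List.ofFn v.1).length : ℤ) := by
    simp only [List.length_ofFn]
    omega
  rw [hkval]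
  refine MeasurableSpace.measurableSet_generateFrom ⟨List.ofFn v.1, ?_, rfl⟩
  intro hnil
  have : (List.ofFn v.1).length = 0 := by rw [hnil]; rfl
  simp only [List.length_ofFn] at this
  omega

lemma pastAlgebra_coord_mem {k : ℤ} (hk : k ≤ 0) (s : Set (Option E)) :
    MeasurableSet[pastAlgebra E] {σ : CodeSpace E | σ k ∈ s} := by
  have h : {σ : CodeSpace E | σ k ∈ s} = ⋃ eo ∈ s, {σ : CodeSpace E | σ k = eo} := by
    ext σ
    simp
  rw [h]
  exact MeasurableSet.biUnion s.to_countable fun eo _ => pastAlgebra_coord_eq hk eo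

lemma pastAlgebra_measurable_coord {k : ℤ} (hk : k ≤ 0) :
    Measurable[pastAlgebra E] fun σ : CodeSpace E => σ k :=
  @measurable_to_countable' (Option E) (CodeSpace E) _ _ (pastAlgebra E) _
    fun eo => pastAlgebra_coord_eq hk eo

lemma pastAlgebra_cylSetL_past (es : List (Option E)) :
    MeasurableSet[pastAlgebra E] (cylSetL (1 - (es.length : ℤ)) es) := by
  rcases eq_or_ne es [] with rfl | h
  · rw [cylSetL_nil]
    exact MeasurableSet.univ
  · exact MeasurableSpace.measurableSet_generateFrom ⟨es, h, rfl⟩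

end AuxPhi

end AuxPhi

namespace AuxPhi

set_option linter.unusedSectionVars false

section Chunk2

variable {K : Type*} [MetricSpace K] [CompleteSpace K] [MeasurableSpace K] [BorelSpace K]
  {N E : Type*} [Countable N] [Countable E]

lemma iterW_factor (M : MarkovSystem K N E) :
    ∀ n : ℕ, ∃ g : (Fin (n + 1) → Option E) → K → K,
      ∀ (σ : CodeSpace E) (y : K), M.iterW σ n y = g (fun k => σ (-((k : ℕ) : ℤ))) y := by
  intro n
  induction n with
  | zero =>
    refine ⟨fun v y => M.wext (v 0) y, fun σ y => ?_⟩
    simp [MarkovSystem.iterW]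
  | succ n ih =>
    obtain ⟨g, hg⟩ := ih
    refine ⟨fun v y => g (fun k => v k.castSucc) (M.wext (v (Fin.last (n + 1))) y),
      fun σ y => ?_⟩
    show M.iterW σ n (M.wext (σ (-((n : ℤ) + 1))) y) = _
    rw [hg]
    simp only [Fin.coe_castSucc, Fin.val_last]
    congr 2

lemma orbit_factor (M : MarkovSystem K N E) (j0 : N) (xp : N → K) (a n : ℕ) (hab : a ≤ n) :
    ∃ g : (Fin (n + 1) → Option E) → K,
      ∀ σ : CodeSpace E, M.orbit j0 xp σ a = g (fun k => σ (-((k : ℕ) : ℤ))) := by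
  obtain ⟨g, hg⟩ := iterW_factor M a
  refine ⟨fun v => g (fun k => v (Fin.castLE (by omega) k))
      (xp (M.iext j0 (v (Fin.castLE (by omega) (Fin.last a))))), fun σ => ?_⟩
  show M.iterW σ a (xp (M.iext j0 (σ (-(a : ℤ))))) = _
  rw [hg]
  simp only [Fin.coe_castLE, Fin.val_last]

lemma measurable_restrict_past (n : ℕ) :
    Measurable[pastAlgebra E] fun (σ : CodeSpace E) (k : Fin (n + 1)) => σ (-((k : ℕ) : ℤ)) :=
  @measurable_pi_lambda (CodeSpace E) (Fin (n + 1)) (fun _ => Option E) (pastAlgebra E) _ _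
    fun k => pastAlgebra_measurable_coord (by omega)

lemma measurable_factor_past {β : Type*} [MeasurableSpace β] (n : ℕ)
    (ψ : (Fin (n + 1) → Option E) → β) :
    Measurable[pastAlgebra E] fun σ : CodeSpace E => ψ fun k => σ (-((k : ℕ) : ℤ)) :=
  @Measurable.comp (CodeSpace E) (Fin (n + 1) → Option E) β (pastAlgebra E) _ _ _ _
    (measurable_of_countable ψ) (measurable_restrict_past n)

lemma measurable_orbit_past (M : MarkovSystem K N E) (j0 : N) (xp : N → K) (n : ℕ) :
    Measurable[pastAlgebra E] fun σ : CodeSpace E => M.orbit j0 xp σ n := by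
  obtain ⟨g, hg⟩ := orbit_factor M j0 xp n n le_rfl
  have h : (fun σ : CodeSpace E => M.orbit j0 xp σ n)
      = fun σ => g fun k => σ (-((k : ℕ) : ℤ)) := funext hg
  rw [h]
  exact measurable_factor_past n g

lemma measurable_dist_orbit (M : MarkovSystem K N E) (j0 : N) (xp : N → K) (φ : K → K)
    (a b : ℕ) :
    Measurable[pastAlgebra E] fun σ : CodeSpace E =>
      dist (φ (M.orbit j0 xp σ a)) (φ (M.orbit j0 xp σ b)) := by
  obtain ⟨ga, hga⟩ := orbit_factor M j0 xp a (max a b) (le_max_left _ _)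
  obtain ⟨gb, hgb⟩ := orbit_factor M j0 xp b (max a b) (le_max_right _ _)
  have h : (fun σ : CodeSpace E => dist (φ (M.orbit j0 xp σ a)) (φ (M.orbit j0 xp σ b)))
      = fun σ => (fun v => dist (φ (ga v)) (φ (gb v)))
          fun k : Fin (max a b + 1) => σ (-((k : ℕ) : ℤ)) := by
    funext σ
    rw [hga, hgb]
  rw [h]
  exact measurable_factor_past (max a b) fun v => dist (φ (ga v)) (φ (gb v))

/-- The set of codes for which `φ ∘ orbit` converges. -/
def convSet (M : MarkovSystem K N E) (j0 : N) (xp : N → K) (φ : K → K) :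
    Set (CodeSpace E) :=
  {σ | ∃ l : K, Tendsto (fun n : ℕ => φ (M.orbit j0 xp σ n)) atTop (𝓝 l)}

lemma measurableSet_convSet (M : MarkovSystem K N E) (j0 : N) (xp : N → K) (φ : K → K) :
    MeasurableSet[pastAlgebra E] (convSet M j0 xp φ) := by
  have h : convSet M j0 xp φ =
      ⋂ (q : ℚ), ⋂ (_ : 0 < q), ⋃ (Nn : ℕ), ⋂ (a : ℕ), ⋂ (_ : Nn ≤ a), ⋂ (b : ℕ), ⋂ (_ : Nn ≤ b),
        {σ : CodeSpace E | dist (φ (M.orbit j0 xp σ a)) (φ (M.orbit j0 xp σ b)) < (q : ℝ)} := by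
    ext σ
    simp only [convSet, Set.mem_setOf_eq, Set.mem_iInter, Set.mem_iUnion]
    constructor
    · rintro ⟨l, hl⟩ q hq
      obtain ⟨Nn, hN⟩ := (Metric.cauchySeq_iff.mp hl.cauchySeq) q (by exact_mod_cast hq)
      exact ⟨Nn, fun a ha b hb => hN a ha b hb⟩
    · intro hcau
      refine cauchySeq_tendsto_of_complete (Metric.cauchySeq_iff.mpr ?_)
      intro ε hε
      obtain ⟨q, hq0, hqε⟩ := exists_rat_btwn hε
      obtain ⟨Nn, hN⟩ := hcau q (by exact_mod_cast hq0)
      exact ⟨Nn, fun a ha b hb => lt_trans (hN a ha b hb) hqε⟩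
  rw [h]
  refine MeasurableSet.iInter fun q => MeasurableSet.iInter fun _ => ?_
  refine MeasurableSet.iUnion fun Nn => ?_
  refine MeasurableSet.iInter fun a => MeasurableSet.iInter fun _ => ?_
  refine MeasurableSet.iInter fun b => MeasurableSet.iInter fun _ => ?_
  exact measurable_dist_orbit M j0 xp φ a b measurableSet_Iio

end Chunk2

end AuxPhi

namespace AuxPhi

set_option linter.unusedSectionVars false

section Chunk3

variable {K : Type*} [MetricSpace K] [CompleteSpace K] [MeasurableSpace K] [BorelSpace K]
  {N E : Type*} [Countable N] [Countable E]

lemma measurable_comp_past {β γ : Type*} [MeasurableSpace β] [MeasurableSpace γ]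
    {f : CodeSpace E → β} {g : β → γ} (hf : Measurable[pastAlgebra E] f) (hg : Measurable g) :
    Measurable[pastAlgebra E] fun σ => g (f σ) :=
  fun t ht => hf (hg ht)

lemma measurable_piecewise_past {β : Type*} [MeasurableSpace β]
    {s : Set (CodeSpace E)} {f g : CodeSpace E → β} (hs : MeasurableSet[pastAlgebra E] s)
    (hf : Measurable[pastAlgebra E] f) (hg : Measurable[pastAlgebra E] g) :
    Measurable[pastAlgebra E] (s.piecewise f g) := by
  intro t ht
  rw [Set.piecewise_preimage]
  exact MeasurableSet.ite hs (hf ht) (hg ht)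

lemma measurable_of_tendsto_past {f : ℕ → CodeSpace E → K} {g : CodeSpace E → K}
    (hf : ∀ n, Measurable[pastAlgebra E] (f n))
    (h : ∀ σ, Tendsto (fun n => f n σ) atTop (𝓝 (g σ))) :
    Measurable[pastAlgebra E] g := by
  letI : MeasurableSpace (CodeSpace E) := pastAlgebra E
  exact measurable_of_tendsto_metrizable hf (tendsto_pi_nhds.mpr h)

/-- The limit of `w_e ∘ orbit`, where defined. -/
noncomputable def wlim (M : MarkovSystem K N E) (j0 : N) (xp : N → K) (e : E)
    (σ : CodeSpace E) : K :=
  if h : σ ∈ convSet M j0 xp (M.w e) then h.choose else xp j0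

lemma tendsto_wlim {M : MarkovSystem K N E} {j0 : N} {xp : N → K} {e : E} {σ : CodeSpace E}
    (hσ : σ ∈ convSet M j0 xp (M.w e)) :
    Tendsto (fun n : ℕ => M.w e (M.orbit j0 xp σ n)) atTop (𝓝 (wlim M j0 xp e σ)) := by
  rw [wlim, dif_pos hσ]
  exact hσ.choose_spec

lemma measurable_wlim (M : MarkovSystem K N E) (j0 : N) (xp : N → K) (e : E) :
    Measurable[pastAlgebra E] (wlim M j0 xp e) := by
  set C := convSet M j0 xp (M.w e) with hC
  have hCm : MeasurableSet[pastAlgebra E] C := measurableSet_convSet M j0 xp (M.w e)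
  have hfm : ∀ n : ℕ, Measurable[pastAlgebra E]
      (C.piecewise (fun σ => M.w e (M.orbit j0 xp σ n)) fun _ => xp j0) := fun n =>
    measurable_piecewise_past hCm
      (measurable_comp_past (measurable_orbit_past M j0 xp n) (M.w_measurable e))
      (fun t _ => MeasurableSet.const _)
  refine measurable_of_tendsto_past hfm ?_
  intro σ
  by_cases hσ : σ ∈ C
  · have h1 : ∀ n : ℕ, C.piecewise (fun σ => M.w e (M.orbit j0 xp σ n)) (fun _ => xp j0) σ
        = M.w e (M.orbit j0 xp σ n) := fun n => Set.piecewise_eq_of_mem _ _ _ hσ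
    simp only [h1]
    exact tendsto_wlim hσ
  · have h1 : ∀ n : ℕ, C.piecewise (fun σ => M.w e (M.orbit j0 xp σ n)) (fun _ => xp j0) σ
        = xp j0 := fun n => Set.piecewise_eq_of_notMem _ _ _ hσ
    simp only [h1]
    rw [wlim, dif_neg hσ]
    exact tendsto_const_nhds

lemma measurableSet_pathSpace (M : MarkovSystem K N E) :
    MeasurableSet M.pathSpace := by
  have h : M.pathSpace = ⋂ (n : ℤ), ⋃ (e : E), ⋃ (e' : E),
      ({σ : CodeSpace E | σ n = some e} ∩ {σ : CodeSpace E | σ (n + 1) = some e'}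
        ∩ {_σ : CodeSpace E | M.i e' = M.t e}) := by
    ext σ
    simp only [MarkovSystem.pathSpace, Set.mem_setOf_eq, Set.mem_iInter, Set.mem_iUnion,
      Set.mem_inter_iff]
    constructor
    · intro hσ n
      obtain ⟨e, e', h1, h2, h3⟩ := hσ n
      exact ⟨e, e', ⟨h1, h2⟩, h3⟩
    · intro hσ n
      obtain ⟨e, e', ⟨h1, h2⟩, h3⟩ := hσ n
      exact ⟨e, e', h1, h2, h3⟩
  rw [h]
  refine MeasurableSet.iInter fun n => ?_
  refine MeasurableSet.iUnion fun e => MeasurableSet.iUnion fun e' => ?_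
  exact ((measurableSet_coord_eq n (some e)).inter
    (measurableSet_coord_eq (n + 1) (some e'))).inter (MeasurableSet.const _)

lemma measurableSet_codeDomain (M : MarkovSystem K N E) (j0 : N) (xp : N → K) :
    MeasurableSet (M.codeDomain j0 xp) := by
  have h : M.codeDomain j0 xp = M.pathSpace ∩ convSet M j0 xp id := rfl
  rw [h]
  exact (measurableSet_pathSpace M).inter
    (pastAlgebra_le _ (measurableSet_convSet M j0 xp id))

lemma tendsto_orbit_code {M : MarkovSystem K N E} {j0 : N} {xp : N → K} {σ : CodeSpace E}
    (hσ : σ ∈ M.codeDomain j0 xp) :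
    Tendsto (fun n : ℕ => M.orbit j0 xp σ n) atTop (𝓝 (M.code j0 xp σ)) := by
  rw [MarkovSystem.code, dif_pos hσ]
  exact hσ.2.choose_spec

lemma measurable_code (M : MarkovSystem K N E) (j0 : N) (xp : N → K) :
    Measurable (M.code j0 xp) := by
  set D := M.codeDomain j0 xp with hD
  have hDm : MeasurableSet D := measurableSet_codeDomain M j0 xp
  have hsec : Measurable fun σ : CodeSpace E => xp (M.text j0 (σ 0)) :=
    (measurable_of_countable fun eo : Option E => xp (M.text j0 eo)).comp (measurable_coord 0)
  have hfm : ∀ n : ℕ, Measurable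
      (D.piecewise (fun σ => M.orbit j0 xp σ n) fun σ => xp (M.text j0 (σ 0))) := fun n =>
    Measurable.piecewise hDm ((measurable_orbit_past M j0 xp n).mono pastAlgebra_le le_rfl) hsec
  refine measurable_of_tendsto_metrizable hfm ?_
  rw [tendsto_pi_nhds]
  intro σ
  by_cases hσ : σ ∈ D
  · have h1 : ∀ n : ℕ, D.piecewise (fun σ => M.orbit j0 xp σ n)
        (fun σ => xp (M.text j0 (σ 0))) σ = M.orbit j0 xp σ n := fun n =>
      Set.piecewise_eq_of_mem _ _ _ hσ
    simp only [h1]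
    exact tendsto_orbit_code hσ
  · have h1 : ∀ n : ℕ, D.piecewise (fun σ => M.orbit j0 xp σ n)
        (fun σ => xp (M.text j0 (σ 0))) σ = xp (M.text j0 (σ 0)) := fun n =>
      Set.piecewise_eq_of_notMem _ _ _ hσ
    simp only [h1]
    rw [MarkovSystem.code, dif_neg hσ]
    exact tendsto_const_nhds

end Chunk3

end AuxPhi

namespace AuxPhi

set_option linter.unusedSectionVars false

section Chunk4

variable {K : Type*} [MetricSpace K] [CompleteSpace K] [MeasurableSpace K] [BorelSpace K]
  {N E : Type*} [Countable N] [Countable E]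

lemma shift_iterate_apply (j : ℕ) (σ : CodeSpace E) (k : ℤ) :
    (shiftMap E)^[j] σ k = σ (k + j) := by
  induction j generalizing σ with
  | zero => simp
  | succ j ih =>
    rw [Function.iterate_succ_apply]
    rw [ih]
    show σ (k + j + 1) = σ (k + (j + 1 : ℕ))
    congr 1
    push_cast
    ring

lemma shift_mem_pathSpace {M : MarkovSystem K N E} {σ : CodeSpace E}
    (hσ : σ ∈ M.pathSpace) : shiftMap E σ ∈ M.pathSpace := by
  intro n
  obtain ⟨e, e', h1, h2, h3⟩ := hσ (n + 1)
  refine ⟨e, e', h1, ?_, h3⟩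
  show σ (n + 1 + 1) = some e'
  rwa [show n + 1 + 1 = n + 1 + 1 from rfl]

lemma iterW_shift (M : MarkovSystem K N E) (σ : CodeSpace E) :
    ∀ (n : ℕ) (y : K), M.iterW (shiftMap E σ) (n + 1) y = M.wext (σ 1) (M.iterW σ n y) := by
  intro n
  induction n with
  | zero =>
    intro y
    show M.wext (shiftMap E σ 0) (M.wext (shiftMap E σ (-(0 + 1 : ℤ))) y)
      = M.wext (σ 1) (M.wext (σ 0) y)
    have h1 : shiftMap E σ 0 = σ 1 := by show σ (0 + 1) = σ 1; norm_num
    have h2 : shiftMap E σ (-(0 + 1 : ℤ)) = σ 0 := by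
      show σ (-(0 + 1 : ℤ) + 1) = σ 0; norm_num
    rw [h1, h2]
  | succ n ih =>
    intro y
    show M.iterW (shiftMap E σ) (n + 1) (M.wext (shiftMap E σ (-((n : ℤ) + 1 + 1))) y) = _
    rw [ih]
    have h2 : shiftMap E σ (-((n : ℤ) + 1 + 1)) = σ (-((n : ℤ) + 1)) := by
      show σ (-((n : ℤ) + 1 + 1) + 1) = σ (-((n : ℤ) + 1))
      congr 1
      all_goals omega
    rw [h2]
    rfl

lemma orbit_shift (M : MarkovSystem K N E) (j0 : N) (xp : N → K) (σ : CodeSpace E) (n : ℕ) :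
    M.orbit j0 xp (shiftMap E σ) (n + 1) = M.wext (σ 1) (M.orbit j0 xp σ n) := by
  simp only [MarkovSystem.orbit]
  have harg : shiftMap E σ (-((n + 1 : ℕ) : ℤ)) = σ (-(n : ℤ)) := by
    show σ (-((n + 1 : ℕ) : ℤ) + 1) = σ (-(n : ℤ))
    congr 1
    all_goals omega
  rw [harg, iterW_shift]

lemma iterW_mem {M : MarkovSystem K N E} {σ : CodeSpace E} (hσ : σ ∈ M.pathSpace) :
    ∀ (n : ℕ) (y : K), (∀ e : E, σ (-(n : ℤ)) = some e → y ∈ M.Kset (M.i e)) →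
      ∀ e₀ : E, σ 0 = some e₀ → M.iterW σ n y ∈ M.Kset (M.t e₀) := by
  intro n
  induction n with
  | zero =>
    intro y hy e₀ h0
    show M.wext (σ 0) y ∈ _
    rw [h0]
    exact M.w_mapsTo e₀ (hy e₀ (by simpa using h0))
  | succ n ih =>
    intro y hy e₀ h0
    obtain ⟨e1, e2, h1, h2, h3⟩ := hσ (-((n : ℤ) + 1))
    have h2' : σ (-(n : ℤ)) = some e2 := by
      rw [show -(n : ℤ) = -((n : ℤ) + 1) + 1 by ring]
      exact h2
    show M.iterW σ n (M.wext (σ (-((n : ℤ) + 1))) y) ∈ _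
    refine ih _ ?_ e₀ h0
    intro e he
    have he2 : e = e2 := Option.some_injective E (he.symm.trans h2')
    subst he2
    have hy1 : y ∈ M.Kset (M.i e1) := by
      refine hy e1 ?_
      rw [show -(((n + 1 : ℕ)) : ℤ) = -((n : ℤ) + 1) by push_cast; ring]
      exact h1
    rw [h1]
    show M.w e1 y ∈ M.Kset (M.i e)
    rw [h3]
    exact M.w_mapsTo e1 hy1

lemma orbit_mem {M : MarkovSystem K N E} {j0 : N} {xp : N → K} (hxp : ∀ j, xp j ∈ M.Kset j)
    {σ : CodeSpace E} (hσ : σ ∈ M.pathSpace) {e₀ : E} (h0 : σ 0 = some e₀) (n : ℕ) :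
    M.orbit j0 xp σ n ∈ M.Kset (M.t e₀) := by
  show M.iterW σ n (xp (M.iext j0 (σ (-(n : ℤ))))) ∈ _
  refine iterW_mem hσ n _ ?_ e₀ h0
  intro e he
  rw [he]
  show xp (M.i e) ∈ _
  exact hxp _

lemma uc_cauchy {f : K → K} {s : Set K} (hf : UniformContinuousOn f s) {u : ℕ → K}
    (hu : CauchySeq u) (hmem : ∀ n, u n ∈ s) : CauchySeq fun n => f (u n) := by
  rw [Metric.cauchySeq_iff] at hu ⊢
  rw [Metric.uniformContinuousOn_iff] at hf
  intro ε hε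
  obtain ⟨δ, hδ, hδ'⟩ := hf ε hε
  obtain ⟨Nn, hN⟩ := hu δ hδ
  exact ⟨Nn, fun a ha b hb => hδ' _ (hmem a) _ (hmem b) (hN a ha b hb)⟩

lemma pathSpace_coord_some {M : MarkovSystem K N E} {σ : CodeSpace E}
    (hσ : σ ∈ M.pathSpace) (n : ℤ) : ∃ e : E, σ n = some e := by
  obtain ⟨e, _, h1, _, _⟩ := hσ n
  exact ⟨e, h1⟩

/-- Main dynamical lemma: on `D ∩ {σ₁ = e}`, the shifted code is `wlim e`. -/
lemma shift_code {M : MarkovSystem K N E} {j0 : N} {xp : N → K} (hxp : ∀ j, xp j ∈ M.Kset j)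
    (hw : ∀ e : E, UniformContinuousOn (M.w e) (M.Kset (M.i e)))
    {σ : CodeSpace E} (hσ : σ ∈ M.codeDomain j0 xp) {e : E} (h1 : σ 1 = some e) :
    M.code j0 xp (shiftMap E σ) = wlim M j0 xp e σ := by
  obtain ⟨hpath, hconv⟩ := hσ
  obtain ⟨e₀, e₁, h0, h1', hie⟩ := hpath 0
  have h1'' : σ 1 = some e₁ := by rw [show (1 : ℤ) = 0 + 1 from rfl]; exact h1'
  have he₁ : e₁ = e := Option.some_injective E (h1''.symm.trans h1)
  have hie' : M.i e = M.t e₀ := he₁ ▸ hie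
  have horbmem : ∀ n : ℕ, M.orbit j0 xp σ n ∈ M.Kset (M.i e) := by
    intro n
    rw [hie']
    exact orbit_mem hxp hpath h0 n
  have htend := tendsto_orbit_code ⟨hpath, hconv⟩
  have hC : σ ∈ convSet M j0 xp (M.w e) := by
    refine cauchySeq_tendsto_of_complete (uc_cauchy (hw e) htend.cauchySeq horbmem)
  have hwt := tendsto_wlim hC
  have hps : shiftMap E σ ∈ M.pathSpace := shift_mem_pathSpace hpath
  have horb' : Tendsto (fun n : ℕ => M.orbit j0 xp (shiftMap E σ) n) atTop
      (𝓝 (wlim M j0 xp e σ)) := by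
    rw [← tendsto_add_atTop_iff_nat 1]
    have heq : (fun n : ℕ => M.orbit j0 xp (shiftMap E σ) (n + 1))
        = fun n : ℕ => M.w e (M.orbit j0 xp σ n) := by
      funext n
      rw [orbit_shift, h1]
      rfl
    rw [heq]
    exact hwt
  have hDs : shiftMap E σ ∈ M.codeDomain j0 xp := ⟨hps, _, horb'⟩
  exact tendsto_nhds_unique (tendsto_orbit_code hDs) horb'

/-- When the code point lies in the right partition element, `wlim` is `w_e ∘ code`. -/
lemma wlim_eq_w {M : MarkovSystem K N E} {j0 : N} {xp : N → K} (hxp : ∀ j, xp j ∈ M.Kset j)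
    (hw : ∀ e : E, UniformContinuousOn (M.w e) (M.Kset (M.i e)))
    {σ : CodeSpace E} (hσ : σ ∈ M.codeDomain j0 xp) {e e₀ : E}
    (h0 : σ 0 = some e₀) (hte : M.t e₀ = M.i e) (hF : M.code j0 xp σ ∈ M.Kset (M.i e)) :
    wlim M j0 xp e σ = M.w e (M.code j0 xp σ) := by
  have horbmem : ∀ n : ℕ, M.orbit j0 xp σ n ∈ M.Kset (M.i e) := by
    intro n
    rw [← hte]
    exact orbit_mem hxp hσ.1 h0 n
  have htend := tendsto_orbit_code hσ
  have hwt : Tendsto (fun n : ℕ => M.w e (M.orbit j0 xp σ n)) atTop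
      (𝓝 (M.w e (M.code j0 xp σ))) := by
    have hcont := ((hw e).continuousOn) _ hF
    exact Filter.Tendsto.comp hcont (tendsto_nhdsWithin_iff.mpr
      ⟨htend, Filter.Eventually.of_forall horbmem⟩)
  have hC : σ ∈ convSet M j0 xp (M.w e) := ⟨_, hwt⟩
  exact tendsto_nhds_unique (tendsto_wlim hC) hwt

end Chunk4

end AuxPhi

namespace AuxPhi

set_option linter.unusedSectionVars false

section Chunk5

variable {K : Type*} [MetricSpace K] [CompleteSpace K] [MeasurableSpace K] [BorelSpace K]
  {N E : Type*} [Countable N] [Countable E]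

/-- Composition of the maps along a word. -/
def wcomp (M : MarkovSystem K N E) : List (Option E) → K → K
  | [], x => x
  | o :: r, x => wcomp M r (M.wext o x)

lemma pext_nonneg (M : MarkovSystem K N E) (o : Option E) (x : K) : 0 ≤ M.pext o x := by
  cases o with
  | none => exact le_refl 0
  | some e => exact M.p_nonneg e x

lemma pext_le_one (M : MarkovSystem K N E) (o : Option E) (x : K) : M.pext o x ≤ 1 := by
  cases o with
  | none => exact zero_le_one
  | some e => exact M.p_le_one e x

lemma wordProb_nonneg (M : MarkovSystem K N E) :
    ∀ (l : List (Option E)) (x : K), 0 ≤ M.wordProb l x := by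
  intro l
  induction l with
  | nil => intro x; exact zero_le_one
  | cons o r ih => intro x; exact mul_nonneg (pext_nonneg M o x) (ih _)

lemma wordProb_none (M : MarkovSystem K N E) :
    ∀ (l : List (Option E)), none ∈ l → ∀ x : K, M.wordProb l x = 0 := by
  intro l
  induction l with
  | nil => intro h; exact absurd h List.not_mem_nil
  | cons o r ih =>
    intro h x
    rcases List.mem_cons.mp h with h1 | h2
    · show M.pext o x * M.wordProb r (M.wext o x) = 0
      rw [← h1]
      show (0 : ℝ) * _ = 0
      ring
    · show M.pext o x * M.wordProb r (M.wext o x) = 0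
      rw [ih h2]
      ring

lemma wordProb_append_singleton (M : MarkovSystem K N E) :
    ∀ (l : List (Option E)) (o : Option E) (x : K),
      M.wordProb (l ++ [o]) x = M.wordProb l x * M.pext o (wcomp M l x) := by
  intro l
  induction l with
  | nil =>
    intro o x
    show M.pext o x * 1 = 1 * M.pext o x
    ring
  | cons a r ih =>
    intro o x
    show M.pext a x * M.wordProb (r ++ [o]) (M.wext a x) = _
    rw [ih]
    show _ = M.pext a x * M.wordProb r (M.wext a x) * M.pext o (wcomp M r (M.wext a x))
    ring

lemma wcomp_append_singleton (M : MarkovSystem K N E) :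
    ∀ (l : List (Option E)) (o : Option E) (x : K),
      wcomp M (l ++ [o]) x = M.wext o (wcomp M l x) := by
  intro l
  induction l with
  | nil => intro o x; rfl
  | cons a r ih => intro o x; exact ih o (M.wext a x)

lemma measurable_wext (M : MarkovSystem K N E) (o : Option E) : Measurable (M.wext o) := by
  cases o with
  | none => exact measurable_id
  | some e => exact M.w_measurable e

lemma measurable_pext (M : MarkovSystem K N E) (o : Option E) : Measurable (M.pext o) := by
  cases o with
  | none => exact measurable_const
  | some e => exact M.p_measurable e

lemma measurable_wordProb (M : MarkovSystem K N E) :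
    ∀ l : List (Option E), Measurable fun x : K => M.wordProb l x := by
  intro l
  induction l with
  | nil => exact measurable_const
  | cons o r ih =>
    exact (measurable_pext M o).mul (ih.comp (measurable_wext M o))

lemma exists_map_some : ∀ l : List (Option E), none ∉ l → ∃ l' : List E, l = l'.map some := by
  intro l
  induction l with
  | nil => exact fun _ => ⟨[], rfl⟩
  | cons o r ih =>
    intro hn
    obtain ⟨r', hr⟩ := ih fun h => hn (List.mem_cons_of_mem _ h)
    cases o with
    | none => exact absurd List.mem_cons_self hn
    | some e => exact ⟨e :: r', by rw [List.map_cons, hr]⟩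

lemma cylSetL_append_singleton (m : ℤ) (l : List (Option E)) (o : Option E) :
    cylSetL m (l ++ [o]) = cylSetL m l ∩ {σ : CodeSpace E | σ (m + (l.length : ℤ)) = o} := by
  ext σ
  simp only [cylSetL, Set.mem_inter_iff, Set.mem_setOf_eq, List.length_append,
    List.length_cons, List.length_nil]
  constructor
  · intro h
    refine ⟨fun k hk => ?_, ?_⟩
    · have hk' : k < l.length + (0 + 1) := by omega
      have := h k hk'
      rwa [List.get_eq_getElem, List.getElem_append_left hk] at this
      -- note : getElem hypothesis forms may differ; fixed below if needed
    · have hk' : l.length < l.length + (0 + 1) := by omega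
      have := h l.length hk'
      rwa [List.get_eq_getElem, List.getElem_concat_length] at this
      rfl
  · rintro ⟨h1, h2⟩ k hk
    rcases Nat.lt_or_ge k l.length with hkl | hkl
    · have := h1 k hkl
      rwa [List.get_eq_getElem, List.getElem_append_left hkl]
    · have hk2 : k = l.length := by omega
      subst hk2
      rw [List.get_eq_getElem, List.getElem_concat_length]
      · exact h2
      · rfl

lemma mem_cylSetL_shift (j : ℕ) (m : ℤ) (es : List (Option E)) (σ : CodeSpace E) :
    (shiftMap E)^[j] σ ∈ cylSetL m es ↔ σ ∈ cylSetL (m + j) es := by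
  simp only [cylSetL, Set.mem_setOf_eq]
  constructor
  · intro h k hk
    have := h k hk
    rwa [shift_iterate_apply, show m + (k : ℤ) + (j : ℤ) = m + (j : ℤ) + (k : ℤ) by ring] at this
  · intro h k hk
    rw [shift_iterate_apply, show m + (k : ℤ) + (j : ℤ) = m + (j : ℤ) + (k : ℤ) by ring]
    exact h k hk

end Chunk5

end AuxPhi

namespace AuxPhi

set_option linter.unusedSectionVars false

section Chunk6

variable {K : Type*} [MetricSpace K] [CompleteSpace K] [MeasurableSpace K] [BorelSpace K]
  {N E : Type*} [Countable N] [Countable E]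

lemma measurable_shiftMap : Measurable (shiftMap E) :=
  measurable_pi_lambda _ fun k => measurable_pi_apply (k + 1)

lemma map_shift_iterate {Λ : Measure (CodeSpace E)}
    (hinv : Measure.map (shiftMap E) Λ = Λ) (j : ℕ) :
    Measure.map ((shiftMap E)^[j]) Λ = Λ := by
  induction j with
  | zero => simp [Measure.map_id]
  | succ j ih =>
    rw [Function.iterate_succ']
    rw [← Measure.map_map measurable_shiftMap (measurable_shiftMap.iterate j)]
    rw [ih, hinv]

lemma lintegral_shift_iterate {Λ : Measure (CodeSpace E)}
    (hinv : Measure.map (shiftMap E) Λ = Λ) (j : ℕ) {f : CodeSpace E → ℝ≥0∞}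
    (hf : Measurable f) :
    ∫⁻ σ, f ((shiftMap E)^[j] σ) ∂Λ = ∫⁻ σ, f σ ∂Λ := by
  conv_rhs => rw [← map_shift_iterate hinv j]
  rw [lintegral_map hf (measurable_shiftMap.iterate j)]

lemma cyl_measure_shift {Λ : Measure (CodeSpace E)}
    (hinv : Measure.map (shiftMap E) Λ = Λ) (es : List (Option E)) (m : ℤ) :
    Λ (cylSetL m es) = Λ (cylSetL 1 es) := by
  have hstep : ∀ m' : ℤ, Λ (cylSetL (m' + 1) es) = Λ (cylSetL m' es) := by
    intro m'
    have hpre : shiftMap E ⁻¹' cylSetL m' es = cylSetL (m' + 1) es := by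
      ext σ
      simp only [Set.mem_preimage, cylSetL, Set.mem_setOf_eq]
      constructor
      · intro h k hk
        have := h k hk
        rw [show m' + 1 + (k : ℤ) = m' + (k : ℤ) + 1 by ring]
        exact this
      · intro h k hk
        have := h k hk
        rw [show m' + 1 + (k : ℤ) = m' + (k : ℤ) + 1 by ring] at this
        exact this
    calc Λ (cylSetL (m' + 1) es) = Λ (shiftMap E ⁻¹' cylSetL m' es) := by rw [hpre]
    _ = (Measure.map (shiftMap E) Λ) (cylSetL m' es) :=
        (Measure.map_apply measurable_shiftMap (measurableSet_cylSetL m' es)).symm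
    _ = Λ (cylSetL m' es) := by rw [hinv]
  have hup : ∀ (m' : ℤ) (k : ℕ), Λ (cylSetL (m' + k) es) = Λ (cylSetL m' es) := by
    intro m' k
    induction k with
    | zero => norm_num
    | succ k ih =>
      have hc : m' + ((k + 1 : ℕ) : ℤ) = (m' + (k : ℤ)) + 1 := by push_cast; ring
      rw [hc, hstep (m' + (k : ℤ)), ih]
  rcases le_or_gt m 1 with hm | hm
  · have h1 : (1 : ℤ) = m + ((1 - m).toNat : ℤ) := by omega
    rw [show Λ (cylSetL 1 es) = Λ (cylSetL (m + ((1 - m).toNat : ℤ)) es) by rw [← h1]]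
    rw [hup m (1 - m).toNat]
  · have h1 : m = 1 + ((m - 1).toNat : ℤ) := by omega
    rw [show Λ (cylSetL m es) = Λ (cylSetL (1 + ((m - 1).toNat : ℤ)) es) by rw [← h1]]
    rw [hup 1 (m - 1).toNat]

variable {M : MarkovSystem K N E} {j0 : N} {xp : N → K} {Λ : Measure (CodeSpace E)}

lemma ae_mem_D (hΛ : M.IsEquilibrium j0 xp Λ) :
    ∀ᵐ σ ∂Λ, σ ∈ M.codeDomain j0 xp := by
  haveI := hΛ.1
  have hD := measurableSet_codeDomain M j0 xp
  have h0 : Λ (M.codeDomain j0 xp)ᶜ = 0 := by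
    rw [measure_compl hD (measure_ne_top _ _), hΛ.2.2.1, measure_univ, tsub_self]
  exact h0

/-- The basic conditional-expectation identity on past-measurable sets. -/
lemma condbase (hΛ : M.IsEquilibrium j0 xp Λ) (e : E) {B : Set (CodeSpace E)}
    (hB : MeasurableSet[pastAlgebra E] B) :
    Λ (B ∩ {σ : CodeSpace E | σ 1 = some e})
      = ∫⁻ σ in B, ENNReal.ofReal (M.p e (M.code j0 xp σ)) ∂Λ := by
  haveI := hΛ.1
  have hm : pastAlgebra E ≤ (inferInstance : MeasurableSpace (CodeSpace E)) := pastAlgebra_le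
  haveI : SigmaFinite (Λ.trim hm) := by
    haveI : IsFiniteMeasure (Λ.trim hm) := MeasureTheory.isFiniteMeasure_trim hm
    infer_instance
  set S : Set (CodeSpace E) := {σ : CodeSpace E | σ 1 = some e} with hSdef
  have hS : MeasurableSet S := measurableSet_coord_eq 1 (some e)
  have hB' : MeasurableSet B := hm _ hB
  have hint : Integrable (S.indicator fun _ : CodeSpace E => (1 : ℝ)) Λ :=
    (integrable_const (1 : ℝ)).indicator hS
  have hcode : Measurable (M.code j0 xp) := measurable_code M j0 xp
  have hpm : Measurable fun σ : CodeSpace E => M.p e (M.code j0 xp σ) :=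
    (M.p_measurable e).comp hcode
  -- step 1 : ∫_B indicator = (Λ (B ∩ S)).toReal
  have h1 : ∫ σ in B, S.indicator (fun _ : CodeSpace E => (1 : ℝ)) σ ∂Λ
      = (Λ (B ∩ S)).toReal := by
    have heq : ∫ σ in B, S.indicator (fun _ : CodeSpace E => (1 : ℝ)) σ ∂Λ
        = ((Λ.restrict B) S).toReal := MeasureTheory.integral_indicator_one hS
    rw [heq, Measure.restrict_apply hS, Set.inter_comm]
  -- step 2 : condexp
  have h2 : ∫ σ in B, S.indicator (fun _ : CodeSpace E => (1 : ℝ)) σ ∂Λ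
      = ∫ σ in B, M.p e (M.code j0 xp σ) ∂Λ := by
    rw [← MeasureTheory.setIntegral_condExp hm hint hB]
    exact setIntegral_congr_ae hB' ((hΛ.2.2.2 e).mono fun σ hσ _ => hσ)
  -- step 3 : lintegral
  have h3 : ∫ σ in B, M.p e (M.code j0 xp σ) ∂Λ
      = (∫⁻ σ in B, ENNReal.ofReal (M.p e (M.code j0 xp σ)) ∂Λ).toReal := by
    rw [integral_eq_lintegral_of_nonneg_ae
      (Filter.Eventually.of_forall fun σ => M.p_nonneg e _) hpm.aestronglyMeasurable]
  have hfin1 : Λ (B ∩ S) ≠ ⊤ := measure_ne_top _ _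
  have hfin2 : (∫⁻ σ in B, ENNReal.ofReal (M.p e (M.code j0 xp σ)) ∂Λ) ≠ ⊤ := by
    refine ne_of_lt (lt_of_le_of_lt ?_ (measure_lt_top (Λ.restrict B) Set.univ))
    calc ∫⁻ σ in B, ENNReal.ofReal (M.p e (M.code j0 xp σ)) ∂Λ
        ≤ ∫⁻ _σ in B, 1 ∂Λ :=
          lintegral_mono fun σ => ENNReal.ofReal_le_one.mpr (M.p_le_one e _)
      _ = (Λ.restrict B) Set.univ := by rw [MeasureTheory.setLIntegral_one]; simp
  exact (ENNReal.toReal_eq_toReal_iff' hfin1 hfin2).mp (h1.symm.trans (h2.trans h3))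

/-- Pulling a bounded past-measurable function through the conditional expectation. -/
lemma pullout (hΛ : M.IsEquilibrium j0 xp Λ) (e : E) {ψ : CodeSpace E → ℝ≥0∞}
    (hψ : Measurable[pastAlgebra E] ψ) :
    ∫⁻ σ, ψ σ * Set.indicator {σ' : CodeSpace E | σ' 1 = some e} (fun _ => (1 : ℝ≥0∞)) σ ∂Λ
      = ∫⁻ σ, ψ σ * ENNReal.ofReal (M.p e (M.code j0 xp σ)) ∂Λ := by
  haveI := hΛ.1
  have hm : pastAlgebra E ≤ (inferInstance : MeasurableSpace (CodeSpace E)) := pastAlgebra_le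
  set S : Set (CodeSpace E) := {σ : CodeSpace E | σ 1 = some e} with hSdef
  have hS : MeasurableSet S := measurableSet_coord_eq 1 (some e)
  have hcode : Measurable (M.code j0 xp) := measurable_code M j0 xp
  set g : CodeSpace E → ℝ≥0∞ := fun σ => ENNReal.ofReal (M.p e (M.code j0 xp σ)) with hg
  have hgm : Measurable g := ENNReal.measurable_ofReal.comp ((M.p_measurable e).comp hcode)
  have hψ' : Measurable ψ := hψ.mono hm le_rfl
  have htrim : (Λ.restrict S).trim hm = (Λ.withDensity g).trim hm := by
    refine @MeasureTheory.Measure.ext (CodeSpace E) (pastAlgebra E) _ _ fun B hB => ?_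
    rw [trim_measurableSet_eq hm hB, trim_measurableSet_eq hm hB,
      Measure.restrict_apply (hm _ hB), withDensity_apply g (hm _ hB)]
    exact condbase hΛ e hB
  calc ∫⁻ σ, ψ σ * S.indicator (fun _ => (1 : ℝ≥0∞)) σ ∂Λ
      = ∫⁻ σ, S.indicator ψ σ ∂Λ := by
        refine lintegral_congr fun σ => ?_
        by_cases hσ : σ ∈ S
        · rw [Set.indicator_of_mem hσ, Set.indicator_of_mem hσ, mul_one]
        · rw [Set.indicator_of_notMem hσ, Set.indicator_of_notMem hσ, mul_zero]
    _ = ∫⁻ σ in S, ψ σ ∂Λ := lintegral_indicator hS ψ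
    _ = ∫⁻ σ, ψ σ ∂((Λ.restrict S).trim hm) := (lintegral_trim hm hψ).symm
    _ = ∫⁻ σ, ψ σ ∂((Λ.withDensity g).trim hm) := by rw [htrim]
    _ = ∫⁻ σ, ψ σ ∂(Λ.withDensity g) := lintegral_trim hm hψ
    _ = ∫⁻ σ, (g * ψ) σ ∂Λ := lintegral_withDensity_eq_lintegral_mul Λ hgm hψ'
    _ = ∫⁻ σ, ψ σ * g σ ∂Λ := lintegral_congr fun σ => mul_comm _ _

/-- A.e., if `p_e(F σ) ≠ 0` then the zero-th letter connects to `e`. -/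
lemma zlem (hΛ : M.IsEquilibrium j0 xp Λ) (e : E) :
    ∀ᵐ σ ∂Λ, M.p e (M.code j0 xp σ) ≠ 0 →
      ∃ e₀ : E, σ 0 = some e₀ ∧ M.t e₀ = M.i e := by
  haveI := hΛ.1
  have hcode : Measurable (M.code j0 xp) := measurable_code M j0 xp
  set B : Set (CodeSpace E) :=
    {σ : CodeSpace E | σ 0 ∈ {eo : Option E | ∀ e₀ : E, eo = some e₀ → M.t e₀ ≠ M.i e}} with hB
  have hBm : MeasurableSet[pastAlgebra E] B := pastAlgebra_coord_mem le_rfl _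
  have hBm' : MeasurableSet B := pastAlgebra_le _ hBm
  have hDnull : Λ (M.codeDomain j0 xp)ᶜ = 0 := ae_mem_D hΛ
  have hzero : Λ (B ∩ {σ : CodeSpace E | σ 1 = some e}) = 0 := by
    refine measure_mono_null ?_ hDnull
    rintro σ ⟨hσB, hσ1⟩ hσD
    obtain ⟨e₀, e₁, h0, h1, hie⟩ := hσD.1 0
    have h1' : σ 1 = some e₁ := by rw [show (1 : ℤ) = 0 + 1 from rfl]; exact h1
    have he₁ : e₁ = e := Option.some_injective E (h1'.symm.trans hσ1)
    exact hσB e₀ h0 (he₁ ▸ hie.symm)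
  have hlz := (condbase hΛ e hBm).symm.trans hzero
  have hmeas : Measurable fun σ : CodeSpace E =>
      ENNReal.ofReal (M.p e (M.code j0 xp σ)) :=
    ENNReal.measurable_ofReal.comp ((M.p_measurable e).comp hcode)
  have hae := (lintegral_eq_zero_iff hmeas).mp hlz
  rw [Filter.EventuallyEq, ae_restrict_iff' hBm'] at hae
  simp only [Pi.zero_apply] at hae
  filter_upwards [hae, ae_mem_D hΛ] with σ hσ hσD hp
  obtain ⟨e₀, h0⟩ := pathSpace_coord_some hσD.1 0
  refine ⟨e₀, h0, ?_⟩
  by_contra hne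
  have hσB : σ ∈ B := by
    intro e₀' h0'
    have : e₀' = e₀ := Option.some_injective E (h0'.symm.trans h0)
    rw [this]
    exact hne
  have := hσ hσB
  rw [ENNReal.ofReal_eq_zero] at this
  exact hp (le_antisymm this (M.p_nonneg e _))

end Chunk6

end AuxPhi

namespace AuxPhi

set_option linter.unusedSectionVars false

section Chunk7

variable {K : Type*} [MetricSpace K] [CompleteSpace K] [MeasurableSpace K] [BorelSpace K]
  {N E : Type*} [Countable N] [Countable E]

lemma measurable_mul_past {f g : CodeSpace E → ℝ≥0∞}
    (hf : Measurable[pastAlgebra E] f) (hg : Measurable[pastAlgebra E] g) :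
    Measurable[pastAlgebra E] fun σ => f σ * g σ := by
  letI : MeasurableSpace (CodeSpace E) := pastAlgebra E
  exact hf.mul hg

lemma measurable_indicator_one_past {s : Set (CodeSpace E)}
    (hs : MeasurableSet[pastAlgebra E] s) :
    Measurable[pastAlgebra E] (Set.indicator s fun _ => (1 : ℝ≥0∞)) := by
  letI : MeasurableSpace (CodeSpace E) := pastAlgebra E
  exact measurable_const.indicator hs

lemma indicator_inter_one (s t : Set (CodeSpace E)) (σ : CodeSpace E) :
    Set.indicator (s ∩ t) (fun _ => (1 : ℝ≥0∞)) σ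
      = Set.indicator s (fun _ => (1 : ℝ≥0∞)) σ * Set.indicator t (fun _ => (1 : ℝ≥0∞)) σ := by
  by_cases hs : σ ∈ s <;> by_cases ht : σ ∈ t <;>
    simp [Set.indicator_apply, hs, ht, Set.mem_inter_iff]

variable {M : MarkovSystem K N E} {j0 : N} {xp : N → K} {Λ : Measure (CodeSpace E)}

lemma claimC (hxp : ∀ j, xp j ∈ M.Kset j)
    (hw : ∀ e : E, UniformContinuousOn (M.w e) (M.Kset (M.i e)))
    (hΛ : M.IsEquilibrium j0 xp Λ) :
    ∀ (es : List E) (h : K → ℝ≥0∞), Measurable h →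
      ∫⁻ σ, Set.indicator (cylSetL 1 (es.map some)) (fun _ => (1 : ℝ≥0∞)) σ
          * h (M.code j0 xp ((shiftMap E)^[es.length] σ)) ∂Λ
        = ∫⁻ σ, ENNReal.ofReal (M.wordProb (es.map some) (M.code j0 xp σ))
          * h (wcomp M (es.map some) (M.code j0 xp σ)) ∂Λ := by
  intro es
  induction es using List.reverseRecOn with
  | nil =>
    intro h hh
    simp only [List.map_nil, List.length_nil, Function.iterate_zero, id_eq, cylSetL_nil,
      Set.indicator_univ]
    refine lintegral_congr fun σ => ?_
    show 1 * h (M.code j0 xp σ) = ENNReal.ofReal (M.wordProb [] (M.code j0 xp σ))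
      * h (wcomp M [] (M.code j0 xp σ))
    show 1 * h (M.code j0 xp σ) = ENNReal.ofReal 1 * h (M.code j0 xp σ)
    rw [ENNReal.ofReal_one]
  | append_singleton rest e ih =>
    intro h hh
    haveI := hΛ.1
    have hinv := hΛ.2.1
    have hcode : Measurable (M.code j0 xp) := measurable_code M j0 xp
    set r : ℕ := rest.length with hr
    set restS : List (Option E) := rest.map some with hrestS
    have hlenS : (restS.length : ℤ) = (r : ℤ) := by rw [hrestS, List.length_map]
    -- the sets
    set A : Set (CodeSpace E) := cylSetL (1 - (r : ℤ)) restS with hA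
    set S1 : Set (CodeSpace E) := {σ : CodeSpace E | σ 1 = some e} with hS1
    set T : Set (CodeSpace E) := {σ : CodeSpace E | σ (1 + (r : ℤ)) = some e} with hT
    have hAm : MeasurableSet[pastAlgebra E] A := by
      have := pastAlgebra_cylSetL_past restS
      rwa [hlenS] at this
    have hAm' : MeasurableSet A := pastAlgebra_le _ hAm
    have hS1m : MeasurableSet S1 := measurableSet_coord_eq 1 (some e)
    -- membership facts under shifting
    have hiA : ∀ σ : CodeSpace E, (shiftMap E)^[r] σ ∈ A ↔ σ ∈ cylSetL 1 restS := by
      intro σ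
      have hmem := mem_cylSetL_shift r (1 - (r : ℤ)) restS σ
      rwa [show (1 - (r : ℤ)) + (r : ℤ) = 1 by ring] at hmem
    have hiS : ∀ σ : CodeSpace E, (shiftMap E)^[r] σ ∈ S1 ↔ σ ∈ T := by
      intro σ
      show (shiftMap E)^[r] σ 1 = some e ↔ σ (1 + (r : ℤ)) = some e
      rw [shift_iterate_apply]
    -- the functions
    set ψh : CodeSpace E → ℝ≥0∞ := fun σ => h (wlim M j0 xp e σ) with hψh
    set h' : K → ℝ≥0∞ := fun x => ENNReal.ofReal (M.p e x) * h (M.w e x) with hh'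
    have hh'm : Measurable h' :=
      (ENNReal.measurable_ofReal.comp (M.p_measurable e)).mul (hh.comp (M.w_measurable e))
    set f : CodeSpace E → ℝ≥0∞ := fun τ =>
      (Set.indicator A (fun _ => (1 : ℝ≥0∞)) τ * Set.indicator S1 (fun _ => (1 : ℝ≥0∞)) τ)
        * h (M.code j0 xp (shiftMap E τ)) with hf
    set f' : CodeSpace E → ℝ≥0∞ := fun τ =>
      Set.indicator A (fun _ => (1 : ℝ≥0∞)) τ * h' (M.code j0 xp τ) with hf'
    have hfm : Measurable f := by
      refine Measurable.mul (Measurable.mul ?_ ?_) ?_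
      · exact measurable_const.indicator hAm'
      · exact measurable_const.indicator hS1m
      · exact hh.comp (hcode.comp measurable_shiftMap)
    have hf'm : Measurable f' := by
      refine Measurable.mul ?_ (hh'm.comp hcode)
      exact measurable_const.indicator hAm'
    -- the word identities
    have hmapfull : (rest ++ [e]).map some = restS ++ [some e] := by
      rw [List.map_append]
      rfl
    have hlenfull : (rest ++ [e]).length = r + 1 := by
      rw [List.length_append]
      rfl
    -- step 1 : LHS = ∫ f ∘ shift^[r]
    have step1 : ∫⁻ σ, Set.indicator (cylSetL 1 ((rest ++ [e]).map some))
          (fun _ => (1 : ℝ≥0∞)) σ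
          * h (M.code j0 xp ((shiftMap E)^[(rest ++ [e]).length] σ)) ∂Λ
        = ∫⁻ σ, f ((shiftMap E)^[r] σ) ∂Λ := by
      refine lintegral_congr fun σ => ?_
      rw [hmapfull, hlenfull, cylSetL_append_singleton, hlenS, indicator_inter_one]
      show (Set.indicator (cylSetL 1 restS) (fun _ => (1 : ℝ≥0∞)) σ
          * Set.indicator T (fun _ => (1 : ℝ≥0∞)) σ)
          * h (M.code j0 xp ((shiftMap E)^[r + 1] σ)) = f ((shiftMap E)^[r] σ)
      show _ = (Set.indicator A (fun _ => (1 : ℝ≥0∞)) ((shiftMap E)^[r] σ)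
          * Set.indicator S1 (fun _ => (1 : ℝ≥0∞)) ((shiftMap E)^[r] σ))
          * h (M.code j0 xp (shiftMap E ((shiftMap E)^[r] σ)))
      have e1 : Set.indicator A (fun _ => (1 : ℝ≥0∞)) ((shiftMap E)^[r] σ)
          = Set.indicator (cylSetL 1 restS) (fun _ => (1 : ℝ≥0∞)) σ := by
        by_cases hσ : σ ∈ cylSetL 1 restS
        · rw [Set.indicator_of_mem ((hiA σ).mpr hσ), Set.indicator_of_mem hσ]
        · rw [Set.indicator_of_notMem (fun hc => hσ ((hiA σ).mp hc)),
            Set.indicator_of_notMem hσ]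
      have e2 : Set.indicator S1 (fun _ => (1 : ℝ≥0∞)) ((shiftMap E)^[r] σ)
          = Set.indicator T (fun _ => (1 : ℝ≥0∞)) σ := by
        by_cases hσ : σ ∈ T
        · rw [Set.indicator_of_mem ((hiS σ).mpr hσ), Set.indicator_of_mem hσ]
        · rw [Set.indicator_of_notMem (fun hc => hσ ((hiS σ).mp hc)),
            Set.indicator_of_notMem hσ]
      rw [e1, e2, ← Function.iterate_succ_apply' (shiftMap E) r σ]
    -- step 3 : replace code ∘ shift by wlim a.e.
    have step3 : ∫⁻ σ, f σ ∂Λ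
        = ∫⁻ σ, (Set.indicator A (fun _ => (1 : ℝ≥0∞)) σ * ψh σ)
            * Set.indicator S1 (fun _ => (1 : ℝ≥0∞)) σ ∂Λ := by
      refine lintegral_congr_ae ?_
      filter_upwards [ae_mem_D hΛ] with σ hσD
      by_cases h1 : σ ∈ S1
      · have hsc := shift_code hxp hw hσD h1
        show (Set.indicator A (fun _ => (1 : ℝ≥0∞)) σ * Set.indicator S1 (fun _ => (1 : ℝ≥0∞)) σ)
            * h (M.code j0 xp (shiftMap E σ)) = _
        rw [hsc, Set.indicator_of_mem h1]
        show (Set.indicator A (fun _ => (1 : ℝ≥0∞)) σ * 1) * ψh σ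
          = (Set.indicator A (fun _ => (1 : ℝ≥0∞)) σ * ψh σ) * 1
        ring
      · show (Set.indicator A (fun _ => (1 : ℝ≥0∞)) σ * Set.indicator S1 (fun _ => (1 : ℝ≥0∞)) σ)
            * h (M.code j0 xp (shiftMap E σ)) = _
        rw [Set.indicator_of_notMem h1]
        show (Set.indicator A (fun _ => (1 : ℝ≥0∞)) σ * 0) * _
          = (Set.indicator A (fun _ => (1 : ℝ≥0∞)) σ * ψh σ) * 0
        ring
    -- step 4 : conditional expectation pull-out
    have hψm : Measurable[pastAlgebra E] fun σ : CodeSpace E =>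
        Set.indicator A (fun _ => (1 : ℝ≥0∞)) σ * ψh σ := by
      refine measurable_mul_past (measurable_indicator_one_past hAm) ?_
      exact measurable_comp_past (measurable_wlim M j0 xp e) hh
    have step4 : ∫⁻ σ, (Set.indicator A (fun _ => (1 : ℝ≥0∞)) σ * ψh σ)
          * Set.indicator S1 (fun _ => (1 : ℝ≥0∞)) σ ∂Λ
        = ∫⁻ σ, (Set.indicator A (fun _ => (1 : ℝ≥0∞)) σ * ψh σ)
          * ENNReal.ofReal (M.p e (M.code j0 xp σ)) ∂Λ :=
      pullout hΛ e hψm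
    -- step 5 : replace wlim by w_e ∘ code a.e. against the density
    have step5 : ∫⁻ σ, (Set.indicator A (fun _ => (1 : ℝ≥0∞)) σ * ψh σ)
          * ENNReal.ofReal (M.p e (M.code j0 xp σ)) ∂Λ
        = ∫⁻ σ, f' σ ∂Λ := by
      refine lintegral_congr_ae ?_
      filter_upwards [ae_mem_D hΛ, zlem hΛ e] with σ hσD hz
      by_cases hp : M.p e (M.code j0 xp σ) = 0
      · show (Set.indicator A (fun _ => (1 : ℝ≥0∞)) σ * ψh σ)
            * ENNReal.ofReal (M.p e (M.code j0 xp σ))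
          = Set.indicator A (fun _ => (1 : ℝ≥0∞)) σ
            * (ENNReal.ofReal (M.p e (M.code j0 xp σ)) * h (M.w e (M.code j0 xp σ)))
        rw [hp, ENNReal.ofReal_zero]
        ring
      · obtain ⟨e₀, h0, hte⟩ := hz hp
        have hF : M.code j0 xp σ ∈ M.Kset (M.i e) := by
          by_contra hFn
          exact hp (M.p_zero_outside e _ hFn)
        have hwl := wlim_eq_w hxp hw hσD h0 hte hF
        show (Set.indicator A (fun _ => (1 : ℝ≥0∞)) σ * ψh σ)
            * ENNReal.ofReal (M.p e (M.code j0 xp σ))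
          = Set.indicator A (fun _ => (1 : ℝ≥0∞)) σ
            * (ENNReal.ofReal (M.p e (M.code j0 xp σ)) * h (M.w e (M.code j0 xp σ)))
        show Set.indicator A (fun _ => (1 : ℝ≥0∞)) σ * h (wlim M j0 xp e σ)
            * ENNReal.ofReal (M.p e (M.code j0 xp σ)) = _
        rw [hwl]
        ring
    -- step 6 : shift back
    have step6 : ∫⁻ σ, f' σ ∂Λ = ∫⁻ σ, f' ((shiftMap E)^[r] σ) ∂Λ :=
      (lintegral_shift_iterate hinv r hf'm).symm
    -- step 7 : rewrite to the IH form
    have step7 : ∫⁻ σ, f' ((shiftMap E)^[r] σ) ∂Λ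
        = ∫⁻ σ, Set.indicator (cylSetL 1 restS) (fun _ => (1 : ℝ≥0∞)) σ
            * h' (M.code j0 xp ((shiftMap E)^[r] σ)) ∂Λ := by
      refine lintegral_congr fun σ => ?_
      show Set.indicator A (fun _ => (1 : ℝ≥0∞)) ((shiftMap E)^[r] σ)
          * h' (M.code j0 xp ((shiftMap E)^[r] σ)) = _
      have e1 : Set.indicator A (fun _ => (1 : ℝ≥0∞)) ((shiftMap E)^[r] σ)
          = Set.indicator (cylSetL 1 restS) (fun _ => (1 : ℝ≥0∞)) σ := by
        by_cases hσ : σ ∈ cylSetL 1 restS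
        · rw [Set.indicator_of_mem ((hiA σ).mpr hσ), Set.indicator_of_mem hσ]
        · rw [Set.indicator_of_notMem (fun hc => hσ ((hiA σ).mp hc)),
            Set.indicator_of_notMem hσ]
      rw [e1]
    -- step 8 : the induction hypothesis
    have step8 := ih h' hh'm
    -- step 9 : final algebra
    have step9 : ∫⁻ σ, ENNReal.ofReal (M.wordProb restS (M.code j0 xp σ))
          * h' (wcomp M restS (M.code j0 xp σ)) ∂Λ
        = ∫⁻ σ, ENNReal.ofReal (M.wordProb ((rest ++ [e]).map some) (M.code j0 xp σ))
          * h (wcomp M ((rest ++ [e]).map some) (M.code j0 xp σ)) ∂Λ := by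
      refine lintegral_congr fun σ => ?_
      set x : K := M.code j0 xp σ with hx
      rw [hmapfull, wordProb_append_singleton, wcomp_append_singleton,
        ENNReal.ofReal_mul (wordProb_nonneg M restS x)]
      show ENNReal.ofReal (M.wordProb restS x)
          * (ENNReal.ofReal (M.p e (wcomp M restS x)) * h (M.w e (wcomp M restS x)))
        = ENNReal.ofReal (M.wordProb restS x) * ENNReal.ofReal (M.pext (some e) (wcomp M restS x))
          * h (M.wext (some e) (wcomp M restS x))
      rw [show M.pext (some e) = M.p e from rfl, show M.wext (some e) = M.w e from rfl]
      ring
    calc ∫⁻ σ, Set.indicator (cylSetL 1 ((rest ++ [e]).map some)) (fun _ => (1 : ℝ≥0∞)) σ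
          * h (M.code j0 xp ((shiftMap E)^[(rest ++ [e]).length] σ)) ∂Λ
        = ∫⁻ σ, f ((shiftMap E)^[r] σ) ∂Λ := step1
      _ = ∫⁻ σ, f σ ∂Λ := lintegral_shift_iterate hinv r hfm
      _ = _ := step3
      _ = _ := step4
      _ = ∫⁻ σ, f' σ ∂Λ := step5
      _ = ∫⁻ σ, f' ((shiftMap E)^[r] σ) ∂Λ := step6
      _ = ∫⁻ σ, Set.indicator (cylSetL 1 restS) (fun _ => (1 : ℝ≥0∞)) σ
            * h' (M.code j0 xp ((shiftMap E)^[r] σ)) ∂Λ := step7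
      _ = ∫⁻ σ, ENNReal.ofReal (M.wordProb restS (M.code j0 xp σ))
            * h' (wcomp M restS (M.code j0 xp σ)) ∂Λ := step8
      _ = _ := step9

end Chunk7

end AuxPhi

/-- If each `w_e|_{K_{i(e)}}` is uniformly continuous, then `Φ(F(M)) = M`
for every equilibrium state `M ∈ E(M)`: i.e. `M` itself satisfies the defining cylinder
property of `Φ` applied to the pushforward `F(M)`. -/
theorem phi_pushforward_eq_self
    (M : MarkovSystem K N E) (j0 : N) (xp : N → K) (hxp : ∀ j, xp j ∈ M.Kset j)
    (hw : ∀ e : E, UniformContinuousOn (M.w e) (M.Kset (M.i e)))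
    (Λ : Measure (CodeSpace E)) (hΛ : M.IsEquilibrium j0 xp Λ) :
    M.IsPhiOf (Measure.map (M.code j0 xp) Λ) Λ := by
  haveI := hΛ.1
  have hinv := hΛ.2.1
  have hcode : Measurable (M.code j0 xp) := AuxPhi.measurable_code M j0 xp
  refine ⟨hΛ.1, hΛ.2.1, ?_⟩
  intro m hm0 es
  by_cases hnone : none ∈ es
  · have hRHS : ∫⁻ x, ENNReal.ofReal (M.wordProb es x) ∂(Measure.map (M.code j0 xp) Λ)
        = 0 := by
      have hz : ∀ x : K, ENNReal.ofReal (M.wordProb es x) = 0 := fun x => by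
        rw [AuxPhi.wordProb_none M es hnone x, ENNReal.ofReal_zero]
      simp only [hz, lintegral_zero]
    rw [hRHS]
    have hDnull : Λ (M.codeDomain j0 xp)ᶜ = 0 := AuxPhi.ae_mem_D hΛ
    refine measure_mono_null ?_ hDnull
    obtain ⟨⟨k, hk⟩, hkeq⟩ := List.mem_iff_get.mp hnone
    intro σ hσ hσD
    obtain ⟨e', he'⟩ := AuxPhi.pathSpace_coord_some hσD.1 (m + (k : ℤ))
    have := hσ k hk
    rw [hkeq] at this
    rw [this] at he'
    exact nomatch he'
  · obtain ⟨es', rfl⟩ := AuxPhi.exists_map_some es hnone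
    rw [AuxPhi.cyl_measure_shift hinv _ m]
    have hC := AuxPhi.claimC hxp hw hΛ es' (fun _ => (1 : ℝ≥0∞)) measurable_const
    simp only [mul_one] at hC
    have hL : Λ (cylSetL 1 (es'.map some))
        = ∫⁻ σ, Set.indicator (cylSetL 1 (es'.map some)) (fun _ => (1 : ℝ≥0∞)) σ ∂Λ :=
      (MeasureTheory.lintegral_indicator_one
        (AuxPhi.measurableSet_cylSetL 1 (es'.map some))).symm
    rw [hL, hC]
    exact (MeasureTheory.lintegral_map
      (f := fun x : K => ENNReal.ofReal (M.wordProb (List.map some es') x))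
      (ENNReal.measurable_ofReal.comp (AuxPhi.measurable_wordProb M (es'.map some)))
      hcode).symm
end

section
/- (i) Every equilibrium state Λ ∈ E(M) satisfies Λ(G) = 1. (ii) If p_e|_{K_{i(e)}} is uniformly continuous for all e ∈ E, then Λ(G) = 0 for every Λ ∈ E_⊥(M). -/
open MeasureTheory Filter Topology
open scoped ENNReal NNReal Classical

section AuxiliaryLemmas

variable {N E : Type*} [Countable N] [Countable E]

lemma measurableSet_cylSetL (m : ℤ) (es : List (Option E)) :
    MeasurableSet (cylSetL m es) := by
  have h : cylSetL m es =
      ⋂ k : Fin es.length, (fun σ : CodeSpace E => σ (m + (k : ℤ))) ⁻¹' {es.get k} := by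
    ext σ
    simp only [cylSetL, Set.mem_setOf_eq, Set.mem_iInter, Set.mem_preimage,
      Set.mem_singleton_iff]
    exact ⟨fun h k => h k k.2, fun h k hk => h ⟨k, hk⟩⟩
  rw [h]
  exact MeasurableSet.iInter fun k =>
    (measurable_pi_apply _) MeasurableSpace.measurableSet_top

lemma pastAlgebra_le :
    pastAlgebra E ≤ (inferInstance : MeasurableSpace (CodeSpace E)) := by
  refine MeasurableSpace.generateFrom_le ?_
  rintro A ⟨es, -, rfl⟩
  exact measurableSet_cylSetL _ _

lemma measurableSet_pastAlgebra_coord0 (e0 : Option E) :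
    MeasurableSet[pastAlgebra E] {σ : CodeSpace E | σ 0 = e0} := by
  refine MeasurableSpace.measurableSet_generateFrom ⟨[e0], by simp, ?_⟩
  ext σ
  simp only [cylSetL, Set.mem_setOf_eq, List.length_singleton]
  constructor
  · intro h k hk
    have hk0 : k = 0 := Nat.lt_one_iff.mp hk
    subst hk0
    simpa using h
  · intro h
    have := h 0 (by norm_num)
    simpa using this

lemma measurableSet_coord (n : ℤ) (e0 : Option E) :
    MeasurableSet {σ : CodeSpace E | σ n = e0} := by
  have h : {σ : CodeSpace E | σ n = e0} = (fun σ : CodeSpace E => σ n) ⁻¹' {e0} := rfl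
  rw [h]
  exact (measurable_pi_apply n) MeasurableSpace.measurableSet_top

/-- `∫_C E(1_{_1[e]}|𝓕) dΛ = Λ(_1[e] ∩ C)` for `C ∈ 𝓕`. -/
lemma setIntegral_condexp_indicator (Λ : Measure (CodeSpace E)) [IsProbabilityMeasure Λ]
    (e : E) {C : Set (CodeSpace E)} (hC : MeasurableSet[pastAlgebra E] C) :
    ∫ σ in C, (Λ[Set.indicator {τ : CodeSpace E | τ 1 = some e}
        (fun _ => (1 : ℝ)) | pastAlgebra E]) σ ∂Λ
      = (Λ ({τ : CodeSpace E | τ 1 = some e} ∩ C)).toReal := by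
  have hS1 : MeasurableSet {τ : CodeSpace E | τ 1 = some e} := measurableSet_coord 1 _
  have hint : Integrable (Set.indicator {τ : CodeSpace E | τ 1 = some e}
      (fun _ => (1 : ℝ))) Λ := (integrable_const (1 : ℝ)).indicator hS1
  rw [setIntegral_condExp pastAlgebra_le hint hC, setIntegral_indicator hS1,
    setIntegral_const, Set.inter_comm]
  simp [measureReal_def]

end AuxiliaryLemmas

variable {K : Type*} [MetricSpace K] [CompleteSpace K] [MeasurableSpace K] [BorelSpace K]
  {N E : Type*} [Countable N] [Countable E]

/-- (i) Every equilibrium state has `Λ(G) = 1`.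
(ii) If each `p_e|_{K_{i(e)}}` is uniformly continuous (with `pbar` the family of continuous
extensions), then `Λ(G) = 0` for every `Λ ∈ E_⊥(M)`. -/
theorem Gset_full_for_equilibrium_null_for_perp
    (M : MarkovSystem K N E) (j0 : N) (xp : N → K) (hxp : ∀ j, xp j ∈ M.Kset j)
    (pbar : E → K → ℝ) :
    (∀ Λ : Measure (CodeSpace E), M.IsEquilibrium j0 xp Λ → Λ (M.Gset j0 xp) = 1) ∧
    ((∀ e : E, UniformContinuousOn (M.p e) (M.Kset (M.i e))) → M.IsUCExtensionP pbar →
      ∀ Λ : Measure (CodeSpace E), M.IsPerp j0 xp pbar Λ → Λ (M.Gset j0 xp) = 0) := by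
  constructor
  -- Part (i): equilibrium states give `Λ(G) = 1`.
  · rintro Λ ⟨hP, hinv, hD, hce⟩
    haveI := hP
    -- The past-measurable sets `B e = {σ : t(σ₀) ≠ i(e)}`.
    set B : E → Set (CodeSpace E) := fun e =>
      ⋃ e0 : {e0 : E // M.t e0 ≠ M.i e}, {σ : CodeSpace E | σ 0 = some e0.1} with hBdef
    have hBpast : ∀ e, MeasurableSet[pastAlgebra E] (B e) := fun e =>
      MeasurableSet.iUnion fun e0 => measurableSet_pastAlgebra_coord0 _
    have hBamb : ∀ e, MeasurableSet (B e) := fun e => pastAlgebra_le _ (hBpast e)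
    -- `_1[e] ∩ B e` is disjoint from `D`, hence null.
    have hzero : ∀ e : E, Λ ({τ : CodeSpace E | τ 1 = some e} ∩ B e) = 0 := by
      intro e
      set A := {τ : CodeSpace E | τ 1 = some e} ∩ B e with hAdef
      have hA : MeasurableSet A := (measurableSet_coord 1 _).inter (hBamb e)
      have hdisj : M.codeDomain j0 xp ⊆ Aᶜ := by
        intro σ hσ hmem
        obtain ⟨h1, hB⟩ := hmem
        obtain ⟨⟨e0, hne⟩, h0⟩ := Set.mem_iUnion.mp hB
        obtain ⟨a, a', ha, ha', hia⟩ := hσ.1 0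
        rw [zero_add] at ha'
        have hae0 : a = e0 := Option.some_injective _ (ha.symm.trans h0)
        have hae : a' = e := Option.some_injective _ (ha'.symm.trans h1)
        exact hne (by rw [← hae0, ← hae]; exact hia.symm)
      have hc1 : Λ Aᶜ = 1 := le_antisymm prob_le_one (hD ▸ measure_mono hdisj)
      have hsum : Λ A + Λ Aᶜ = Λ Set.univ := measure_add_measure_compl hA
      rw [hc1, measure_univ] at hsum
      have := WithTop.add_right_cancel (by norm_num : (1 : ℝ≥0∞) ≠ ⊤)
        (hsum.trans (zero_add (1 : ℝ≥0∞)).symm)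
      exact this
    -- A.e. on `B e`, `p_e ∘ F` vanishes.
    have hae1 : ∀ e : E, ∀ᵐ σ ∂Λ, σ ∈ B e → M.p e (M.code j0 xp σ) = 0 := by
      intro e
      set g := (Λ[Set.indicator {τ : CodeSpace E | τ 1 = some e}
        (fun _ => (1 : ℝ)) | pastAlgebra E]) with hgdef
      have hint0 : ∫ σ in B e, g σ ∂Λ = 0 := by
        rw [hgdef, setIntegral_condexp_indicator Λ e (hBpast e), hzero e]
        simp
      have hgnn : 0 ≤ᵐ[Λ] g :=
        condExp_nonneg (Filter.Eventually.of_forall fun σ =>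
          Set.indicator_nonneg (fun _ _ => zero_le_one) σ)
      have hgint : Integrable g (Λ.restrict (B e)) := integrable_condExp.restrict
      have hres0 : g =ᵐ[Λ.restrict (B e)] 0 :=
        (integral_eq_zero_iff_of_nonneg_ae (ae_restrict_of_ae hgnn) hgint).mp hint0
      have hres1 : ∀ᵐ σ ∂Λ.restrict (B e), g σ = 0 := by
        filter_upwards [hres0] with σ h using h
      have hres : ∀ᵐ σ ∂Λ, σ ∈ B e → g σ = 0 := (ae_restrict_iff' (hBamb e)).mp hres1
      filter_upwards [hres, hce e] with σ h1 h2 hσ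
      rw [← h2]
      exact h1 hσ
    have haeAll : ∀ᵐ σ ∂Λ, ∀ e : E, σ ∈ B e → M.p e (M.code j0 xp σ) = 0 :=
      ae_all_iff.mpr hae1
    -- On `D` minus a null set, `σ ∈ G`.
    have hsub : M.codeDomain j0 xp ∩
        {σ | ∀ e : E, σ ∈ B e → M.p e (M.code j0 xp σ) = 0} ⊆ M.Gset j0 xp := by
      rintro σ ⟨hσD, hPr⟩
      obtain ⟨e0, e1, h0, h1, hi⟩ := hσD.1 0
      have hcov : M.code j0 xp σ ∈ ⋃ j, M.Kset j := by
        rw [M.Kset_cover]; trivial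
      obtain ⟨j, hj⟩ := Set.mem_iUnion.mp hcov
      have hsum := M.p_tsum_one j (M.code j0 xp σ) hj
      have hex : ∃ e : {e : E // M.i e = j}, M.p e.1 (M.code j0 xp σ) ≠ 0 := by
        by_contra h
        push_neg at h
        rw [tsum_congr (fun e => h e), tsum_zero] at hsum
        norm_num at hsum
      obtain ⟨⟨e, hie⟩, hpne⟩ := hex
      have hte : M.t e0 = M.i e := by
        by_contra hne
        exact hpne (hPr e (Set.mem_iUnion.mpr ⟨⟨e0, hne⟩, h0⟩))
      have hjt : M.t e0 = j := hte.trans hie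
      refine Set.mem_iUnion.mpr ⟨0, Set.mem_iUnion.mpr ⟨j, ?_⟩⟩
      simp only [Function.iterate_zero, Set.preimage_id, id_eq]
      exact ⟨hj, hσD.1, e0, h0, hjt⟩
    -- Conclude.
    have hG1 : (1 : ℝ≥0∞) ≤ Λ (M.Gset j0 xp) := by
      have hbad : Λ {σ | ¬ ∀ e : E, σ ∈ B e → M.p e (M.code j0 xp σ) = 0} = 0 :=
        ae_iff.mp haeAll
      have h1 : Λ (M.codeDomain j0 xp) ≤
          Λ (M.codeDomain j0 xp ∩
            {σ | ∀ e : E, σ ∈ B e → M.p e (M.code j0 xp σ) = 0}) := by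
        refine le_trans (measure_le_inter_add_diff Λ (M.codeDomain j0 xp)
          {σ | ∀ e : E, σ ∈ B e → M.p e (M.code j0 xp σ) = 0}) ?_
        have h2 : Λ (M.codeDomain j0 xp \
            {σ | ∀ e : E, σ ∈ B e → M.p e (M.code j0 xp σ) = 0}) = 0 :=
          measure_mono_null (fun σ hσ => hσ.2) hbad
        rw [h2, add_zero]
      calc (1 : ℝ≥0∞) = Λ (M.codeDomain j0 xp) := hD.symm
        _ ≤ _ := h1
        _ ≤ Λ (M.Gset j0 xp) := measure_mono hsub
    exact le_antisymm prob_le_one hG1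
  -- Part (ii): perpendicular states give `Λ(G) = 0`.
  · rintro hUC hExt Λ ⟨hP, hinv, hD, hce⟩
    haveI := hP
    have hS : Measurable (shiftMap E) :=
      measurable_pi_lambda _ fun k => measurable_pi_apply (k + 1)
    have hmap : ∀ k : ℕ, Measure.map ((shiftMap E)^[k]) Λ = Λ := by
      intro k
      induction k with
      | zero => simp [Measure.map_id]
      | succ n ih =>
        rw [Function.iterate_succ', ← Measure.map_map hS (hS.iterate n), ih, hinv]
    -- Each `F⁻¹(K_j) ∩ T_j` is null.
    have hAj : ∀ j : N, Λ (M.code j0 xp ⁻¹' M.Kset j ∩ M.Tset j) = 0 := by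
      intro j
      set A := M.code j0 xp ⁻¹' M.Kset j ∩ M.Tset j with hAdef
      have hcov : A ⊆ ⋃ e : E, (A ∩ {τ : CodeSpace E | τ 1 = some e}) := by
        intro σ hσ
        obtain ⟨a, a', ha, ha', hia⟩ := hσ.2.1 0
        rw [zero_add] at ha'
        exact Set.mem_iUnion.mpr ⟨a', hσ, ha'⟩
      refine measure_mono_null hcov (measure_iUnion_null fun e => ?_)
      set g := (Λ[Set.indicator {τ : CodeSpace E | τ 1 = some e}
        (fun _ => (1 : ℝ)) | pastAlgebra E]) with hgdef
      set C := {σ : CodeSpace E | g σ ≤ 0} with hCdef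
      have hCpast : MeasurableSet[pastAlgebra E] C :=
        measurableSet_le (stronglyMeasurable_condExp.measurable) measurable_const
      have hzeroC : Λ ({τ : CodeSpace E | τ 1 = some e} ∩ C) = 0 := by
        have h1 : ∫ σ in C, g σ ∂Λ
            = (Λ ({τ : CodeSpace E | τ 1 = some e} ∩ C)).toReal := by
          rw [hgdef]
          exact setIntegral_condexp_indicator Λ e hCpast
        have h2 : ∫ σ in C, g σ ∂Λ ≤ 0 :=
          setIntegral_nonpos (pastAlgebra_le _ hCpast) (fun σ hσ => hσ)
        have h3 : (Λ ({τ : CodeSpace E | τ 1 = some e} ∩ C)).toReal = 0 :=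
          le_antisymm (h1 ▸ h2) ENNReal.toReal_nonneg
        exact ((ENNReal.toReal_eq_zero_iff _).mp h3).resolve_right (measure_ne_top Λ _)
      have hbad : Λ {σ | ¬ g σ = Set.indicator (M.Tset (M.i e))
          (fun σ => M.dp pbar e (M.code j0 xp σ)) σ} = 0 := ae_iff.mp (hce e)
      have hsub : A ∩ {τ : CodeSpace E | τ 1 = some e} ⊆
          ({τ : CodeSpace E | τ 1 = some e} ∩ C) ∪
            {σ | ¬ g σ = Set.indicator (M.Tset (M.i e))
              (fun σ => M.dp pbar e (M.code j0 xp σ)) σ} := by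
        rintro σ ⟨hσA, hσ1⟩
        by_cases hgh : g σ = Set.indicator (M.Tset (M.i e))
            (fun σ => M.dp pbar e (M.code j0 xp σ)) σ
        · left
          refine ⟨hσ1, ?_⟩
          have h0 : Set.indicator (M.Tset (M.i e))
              (fun σ => M.dp pbar e (M.code j0 xp σ)) σ = 0 := by
            by_cases hT : σ ∈ M.Tset (M.i e)
            · rw [Set.indicator_of_mem hT]
              obtain ⟨-, e0, h0', ht0⟩ := hT
              obtain ⟨-, e0', h0'', ht0'⟩ := hσA.2
              have he00 : e0 = e0' := Option.some_injective _ (h0'.symm.trans h0'')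
              have hij : M.i e = j := by rw [← ht0, he00, ht0']
              refine Set.indicator_of_notMem ?_ _
              intro hmem
              exact hmem.2 (by rw [hij]; exact hσA.1)
            · exact Set.indicator_of_notMem hT _
          show g σ ≤ 0
          rw [hgh, h0]
        · right
          exact hgh
      refine le_zero_iff.mp ?_
      calc Λ (A ∩ {τ : CodeSpace E | τ 1 = some e})
          ≤ Λ (({τ : CodeSpace E | τ 1 = some e} ∩ C) ∪
              {σ | ¬ g σ = Set.indicator (M.Tset (M.i e))
                (fun σ => M.dp pbar e (M.code j0 xp σ)) σ}) := measure_mono hsub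
        _ ≤ Λ ({τ : CodeSpace E | τ 1 = some e} ∩ C) +
              Λ {σ | ¬ g σ = Set.indicator (M.Tset (M.i e))
                (fun σ => M.dp pbar e (M.code j0 xp σ)) σ} := measure_union_le _ _
        _ = 0 := by rw [hzeroC, hbad, add_zero]
    -- Shift invariance carries this to all of `G`.
    rw [MarkovSystem.Gset]
    refine measure_iUnion_null fun k => measure_iUnion_null fun j => ?_
    obtain ⟨Nst, hsubN, hNmeas, hNnull⟩ := exists_measurable_superset_of_null (hAj j)
    refine measure_mono_null (Set.preimage_mono hsubN) ?_
    have hpre : Λ ((shiftMap E)^[k] ⁻¹' Nst)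
        = (Measure.map ((shiftMap E)^[k]) Λ) Nst :=
      (Measure.map_apply (hS.iterate k) hNmeas).symm
    rw [hpre, hmap k, hNnull]
end
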